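/- arXiv:1901.11285 — 7 statements merged into one kernel-verified Lean document; each statement's English description precedes it below -/
import Mathlib

section
/- Let G be a finite simple graph, let (T,B) be a tree decomposition of G, and let U be any subset of V(G). Then there exists a node t of T such that the bag B(t) is a vertex separator of U in G, i.e., every connected component of the induced subgraph G[V(G) \ B(t)] contains at most |U|/2 vertices of U. -/
/-- A tree decomposition of a graph `G`: a finite tree together with bags
satisfying the three standard conditions. -/
structure TreeDecomposition {V : Type*} (G : SimpleGraph V) where
  /-- the index type of the nodes of the tree -/
  ι : Type
  /-- the tree has finitely many nodes -/
  instFintype : Fintype ι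
  /-- the underlying tree -/
  tree : SimpleGraph ι
  /-- the underlying graph is a tree -/
  tree_isTree : tree.IsTree
  /-- the bag labelling -/
  bag : ι → Set V
  /-- every vertex of `G` lies in some bag -/
  bag_cover : ∀ v : V, ∃ t : ι, v ∈ bag t
  /-- for every edge of `G` some bag contains both endpoints -/
  bag_adj : ∀ ⦃u v : V⦄, G.Adj u v → ∃ t : ι, u ∈ bag t ∧ v ∈ bag t
  /-- if `t3` lies on the path between `t1` and `t2` then `bag t1 ∩ bag t2 ⊆ bag t3` -/
  bag_path : ∀ (t1 t2 t3 : ι) (p : tree.Walk t1 t2), p.IsPath → t3 ∈ p.support →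
    bag t1 ∩ bag t2 ⊆ bag t3

/-- `S` is a vertex separator of `U` in `G`: every connected component of
`G[V \ S]` contains at most `|U|/2` vertices of `U`. -/
def IsVertexSeparator {V : Type*} (G : SimpleGraph V) (U S : Set V) : Prop :=
  ∀ c : (G.induce (Sᶜ : Set V)).ConnectedComponent,
    2 * {v : ↥(Sᶜ : Set V) |
      (G.induce (Sᶜ : Set V)).connectedComponentMk v = c ∧ (v : V) ∈ U}.ncard ≤ U.ncard



namespace TreeSepAux

open SimpleGraph

variable {ι : Type} {T : SimpleGraph ι}

/-- there is a path from `a` to `b` avoiding `t` -/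
def Away (T : SimpleGraph ι) (t a b : ι) : Prop :=
  ∃ p : T.Walk a b, p.IsPath ∧ t ∉ p.support

lemma Away.symm {t a b : ι} (h : Away T t a b) : Away T t b a := by
  obtain ⟨p, hp, ht⟩ := h
  exact ⟨p.reverse, hp.reverse, by simpa using ht⟩

lemma Away.trans {t a b c : ι} (h1 : Away T t a b) (h2 : Away T t b c) :
    Away T t a c := by
  classical
  obtain ⟨p, hp, htp⟩ := h1
  obtain ⟨q, hq, htq⟩ := h2
  refine ⟨(p.append q).bypass, (p.append q).bypass_isPath, fun hm => ?_⟩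
  have h := (p.append q).support_bypass_subset hm
  rw [SimpleGraph.Walk.support_append] at h
  rcases List.mem_append.1 h with h | h
  · exact htp h
  · exact htq (List.mem_of_mem_tail h)

lemma not_away_both (hT : T.IsTree) {t t' s : ι} (hadj : T.Adj t t')
    (h1 : Away T t s t') (h2 : Away T t' s t) : False := by
  obtain ⟨p, hp, htp⟩ := h1
  obtain ⟨q, hq, htq⟩ := h2
  have hp1 : (SimpleGraph.Walk.cons hadj p.reverse).IsPath := by
    refine hp.reverse.cons ?_
    simpa using htp
  have := hT.2.path_unique ⟨SimpleGraph.Walk.cons hadj p.reverse, hp1⟩ ⟨q.reverse, hq.reverse⟩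
  have hmem : t' ∈ (SimpleGraph.Walk.cons hadj p.reverse).support := by
    rw [SimpleGraph.Walk.support_cons]
    exact List.mem_cons_of_mem _ p.reverse.start_mem_support
  rw [show (SimpleGraph.Walk.cons hadj p.reverse) = q.reverse from congrArg Subtype.val this] at hmem
  rw [SimpleGraph.Walk.support_reverse, List.mem_reverse] at hmem
  exact htq hmem

lemma exists_step (hT : T.IsTree) {t s : ι} (hne : s ≠ t) :
    ∃ t', T.Adj t t' ∧ Away T t s t' := by
  classical
  obtain ⟨w⟩ := hT.1.preconnected t s
  obtain ⟨x, hadj, q, heq⟩ := SimpleGraph.Walk.exists_eq_cons_of_ne (Ne.symm hne) w.bypass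
  have hp : (SimpleGraph.Walk.cons hadj q).IsPath := heq ▸ w.bypass_isPath
  rw [SimpleGraph.Walk.cons_isPath_iff] at hp
  exact ⟨x, hadj, Away.symm ⟨q, hp.1, hp.2⟩⟩

end TreeSepAux

theorem exists_bag_separator {V : Type*} [Fintype V] (G : SimpleGraph V)
    (D : TreeDecomposition G) (U : Set V) :
    ∃ t : D.ι, IsVertexSeparator G U (D.bag t) := by
  classical
  letI := D.instFintype
  by_contra hcon
  push_neg at hcon
  simp only [IsVertexSeparator, not_forall, not_le] at hcon
  choose c hc using hcon
  set T := D.tree with hTdef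
  have hT : T.IsTree := D.tree_isTree
  set A : (t : D.ι) → Set ↥((D.bag t)ᶜ) := fun t =>
    {v | (G.induce ((D.bag t)ᶜ)).connectedComponentMk v = c t ∧ (v : V) ∈ U} with hA
  have hcA : ∀ t, U.ncard < 2 * (A t).ncard := hc
  have hAne : ∀ t, (A t).Nonempty := by
    intro t
    rcases Set.eq_empty_or_nonempty (A t) with h | h
    · exfalso
      have := hcA t
      rw [h, Set.ncard_empty] at this
      omega
    · exact h
  choose v₀ hv₀ using hAne
  choose s₀ hs₀ using fun t => D.bag_cover (v₀ t : V)
  have hs₀ne : ∀ t, s₀ t ≠ t := by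
    intro t h
    have hm := hs₀ t
    rw [h] at hm
    exact (v₀ t).2 hm
  choose f hfadj hfaway using fun t => TreeSepAux.exists_step hT (hs₀ne t)
  -- basic bag lemma
  have away_of_mem : ∀ (t : D.ι) (v : V), v ∉ D.bag t → ∀ {s1 s2 : D.ι},
      v ∈ D.bag s1 → v ∈ D.bag s2 → TreeSepAux.Away T t s1 s2 := by
    intro t v hv s1 s2 h1 h2
    obtain ⟨w⟩ := hT.1.preconnected s1 s2
    refine ⟨w.bypass, w.bypass_isPath, fun hm => hv ?_⟩
    exact D.bag_path s1 s2 t w.bypass w.bypass_isPath hm ⟨h1, h2⟩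
  -- chain lemma along a walk in the induced graph
  have chain : ∀ (t : D.ι) (u w : ↥((D.bag t)ᶜ)) (p : (G.induce ((D.bag t)ᶜ)).Walk u w)
      (su sw : D.ι), (u : V) ∈ D.bag su → (w : V) ∈ D.bag sw →
      TreeSepAux.Away T t su sw := by
    intro t u w p
    induction p with
    | nil =>
      rename_i a
      intro su sw h1 h2
      exact away_of_mem t _ a.2 h1 h2
    | cons h q ih =>
      rename_i a b w'
      intro su sw h1 h2
      obtain ⟨s, hsa, hsb⟩ := D.bag_adj (h : G.Adj (a : V) (b : V))
      exact (away_of_mem t _ a.2 h1 hsa).trans (ih s sw hsb h2)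
  -- pigeonhole on the edges of the tree
  haveI : Fintype T.edgeSet := Fintype.ofFinite _
  have hcard : Fintype.card T.edgeSet < Fintype.card D.ι := by
    have h1 := hT.card_edgeFinset
    rw [SimpleGraph.edgeFinset_card] at h1
    omega
  obtain ⟨t, t', hne, heq⟩ := Fintype.exists_ne_map_eq_of_card_lt
    (fun t => (⟨s(t, f t), (T.mem_edgeSet).2 (hfadj t)⟩ : T.edgeSet)) hcard
  have heq' : s(t, f t) = s(t', f t') := congrArg Subtype.val heq
  rw [Sym2.eq_iff] at heq'
  have hft : f t = t' ∧ f t' = t := by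
    rcases heq' with ⟨h1, h2⟩ | ⟨h1, h2⟩
    · exact absurd h1 hne
    · exact ⟨h2, h1.symm⟩
  -- counting: the two heavy sets intersect in V
  have hUfin : U.Finite := Set.toFinite U
  set SA : Set V := Subtype.val '' (A t) with hSA
  set SA' : Set V := Subtype.val '' (A t') with hSA'
  have hSAU : SA ⊆ U := by rintro x ⟨v, hv, rfl⟩; exact hv.2
  have hSAU' : SA' ⊆ U := by rintro x ⟨v, hv, rfl⟩; exact hv.2
  have hd : ¬ Disjoint SA SA' := by
    intro hdis
    have e1 : SA.ncard = (A t).ncard := Set.ncard_image_of_injective _ Subtype.val_injective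
    have e2 : SA'.ncard = (A t').ncard := Set.ncard_image_of_injective _ Subtype.val_injective
    have e3 : (SA ∪ SA').ncard = SA.ncard + SA'.ncard :=
      Set.ncard_union_eq hdis (Set.toFinite _) (Set.toFinite _)
    have e4 : (SA ∪ SA').ncard ≤ U.ncard :=
      Set.ncard_le_ncard (Set.union_subset hSAU hSAU') hUfin
    have h1 := hcA t
    have h2 := hcA t'
    omega
  obtain ⟨x, hx1, hx2⟩ := Set.not_disjoint_iff.1 hd
  obtain ⟨vx, hvx, hvxx⟩ := hx1
  obtain ⟨vx', hvx', hvxx'⟩ := hx2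
  obtain ⟨sx, hsx⟩ := D.bag_cover x
  have h1 : TreeSepAux.Away T t sx t' := by
    have hreach : (G.induce ((D.bag t)ᶜ)).Reachable vx (v₀ t) :=
      SimpleGraph.ConnectedComponent.exact (hvx.1.trans (hv₀ t).1.symm)
    obtain ⟨p⟩ := hreach
    have hstep := chain t vx (v₀ t) p sx (s₀ t) (by rw [hvxx]; exact hsx) (hs₀ t)
    have := hstep.trans (hfaway t)
    rwa [hft.1] at this
  have h2 : TreeSepAux.Away T t' sx t := by
    have hreach : (G.induce ((D.bag t')ᶜ)).Reachable vx' (v₀ t') :=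
      SimpleGraph.ConnectedComponent.exact (hvx'.1.trans (hv₀ t').1.symm)
    obtain ⟨p⟩ := hreach
    have hstep := chain t' vx' (v₀ t') p sx (s₀ t') (by rw [hvxx']; exact hsx) (hs₀ t')
    have := hstep.trans (hfaway t')
    rwa [hft.2] at this
  exact TreeSepAux.not_away_both hT (hft.1 ▸ hfadj t) h1 h2
end

section
/- Let G be a finite simple graph on n ≥ 1 vertices that admits a tree decomposition in which every bag has at most w+1 vertices. Then G admits a rooted tree decomposition (T', B') in which every bag has at most 6w+6 vertices and whose depth is at most ⌈log₂ n⌉. -/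
namespace ShallowTD

open SimpleGraph
open scoped Classical

/-! ### Graphs from parent maps -/

/-- The graph induced by a parent map. -/
def pGraph {α : Type*} (par : α → α) : SimpleGraph α where
  Adj a b := a ≠ b ∧ (par a = b ∨ par b = a)
  symm := by
    constructor
    rintro a b ⟨hne, h | h⟩
    · exact ⟨hne.symm, Or.inr h⟩
    · exact ⟨hne.symm, Or.inl h⟩
  loopless := by constructor; rintro a ⟨hne, -⟩; exact hne rfl

section Parent

variable {α : Type*} {par : α → α} {root : α} {dep : α → ℕ}
variable (hroot : par root = root) (hdep0 : dep root = 0)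
  (hdep : ∀ t, t ≠ root → dep (par t) + 1 = dep t)

include hdep0 hdep in
lemma walkToRoot : ∀ n t, dep t ≤ n → ∃ p : (pGraph par).Walk t root, p.length = dep t := by
  intro n
  induction n with
  | zero =>
    intro t ht
    rcases eq_or_ne t root with rfl | hne
    · exact ⟨Walk.nil, by simp [hdep0]⟩
    · exact absurd ((hdep t hne).symm ▸ ht) (by omega)
  | succ n ih =>
    intro t ht
    rcases eq_or_ne t root with rfl | hne
    · exact ⟨Walk.nil, by simp [hdep0]⟩
    · have hd := hdep t hne
      have hadj : (pGraph par).Adj t (par t) := by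
        refine ⟨?_, Or.inl rfl⟩
        intro h
        rw [← h] at hd; omega
      obtain ⟨p, hp⟩ := ih (par t) (by omega)
      exact ⟨SimpleGraph.Walk.cons hadj p, by simp [hp]; omega⟩

include hdep0 hdep in
lemma pGraph_connected : (pGraph par).Connected := by
  have : Nonempty α := ⟨root⟩
  refine ⟨fun a b => ?_⟩
  obtain ⟨p, -⟩ := walkToRoot hdep0 hdep (dep a) a le_rfl
  obtain ⟨q, -⟩ := walkToRoot hdep0 hdep (dep b) b le_rfl
  exact p.reachable.trans q.reachable.symm

include hroot hdep in
lemma adj_max_dep {m y : α} (hadj : (pGraph par).Adj m y) (hd : dep y ≤ dep m) :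
    par m = y := by
  rcases hadj with ⟨hne, h | h⟩
  · exact h
  · exfalso
    have hyroot : y ≠ root := by
      rintro rfl
      rw [hroot] at h
      exact hne h.symm
    have := hdep y hyroot
    rw [h] at this
    omega

include hroot hdep in
lemma pGraph_isAcyclic : (pGraph par).IsAcyclic := by
  classical
  intro v c hc
  obtain ⟨m, hm, hmax⟩ := Finset.exists_max_image c.support.toFinset dep
    ⟨v, by simp [c.start_mem_support]⟩
  simp only [List.mem_toFinset] at hm
  have hmax' : ∀ x ∈ c.support, dep x ≤ dep m := by
    intro x hx
    exact hmax x (by simpa using hx)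
  have hcyc : (c.rotate m hm).IsCycle := hc.rotate hm
  have hsupp : ∀ x ∈ (c.rotate m hm).support, x ∈ c.support := by
    intro x hx
    rw [(c.rotate m hm).support_eq_cons] at hx
    rcases List.mem_cons.mp hx with hx | hx
    · exact hx ▸ hm
    · have := (Walk.support_rotate c m hm).mem_iff.mp hx
      rw [c.support_eq_cons]
      exact List.mem_cons_of_mem _ this
  cases hrot : c.rotate m hm with
  | nil =>
    rw [hrot] at hcyc
    exact Walk.IsCycle.not_of_nil hcyc
  | @cons _ u _ h q =>
    rw [hrot] at hcyc hsupp
    rw [Walk.cons_isCycle_iff] at hcyc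
    obtain ⟨hqpath, hmu_not⟩ := hcyc
    have hu : par m = u := by
      refine adj_max_dep hroot hdep h (hmax' u ?_)
      exact hsupp u (by simp [Walk.support_cons, q.start_mem_support])
    have hqne : u ≠ m := (pGraph par).ne_of_adj h |>.symm
    cases hq : q.reverse with
    | nil =>
      apply hqne
      have hlen := congrArg Walk.length hq
      simp only [Walk.length_reverse, Walk.length_nil] at hlen
      exact Walk.eq_of_length_eq_zero hlen
    | @cons _ x _ h' q'' =>
      have hx : par m = x := by
        refine adj_max_dep hroot hdep h' (hmax' x ?_)
        apply hsupp
        have hxq : x ∈ q.support := by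
          have : x ∈ q.reverse.support := by
            rw [hq]; simp [Walk.support_cons, q''.start_mem_support]
          simpa [Walk.support_reverse] using this
        simp [Walk.support_cons, hxq]
      apply hmu_not
      have : s(m, x) ∈ q.reverse.edges := by
        rw [hq]; simp
      rw [Walk.edges_reverse, List.mem_reverse] at this
      have hux : u = x := by rw [← hu, hx]
      subst hux
      exact this

include hroot hdep0 hdep in
lemma pGraph_isTree : (pGraph par).IsTree :=
  ⟨pGraph_connected hdep0 hdep, pGraph_isAcyclic hroot hdep⟩

include hdep0 hdep in
lemma pGraph_dist_le (t : α) : (pGraph par).dist root t ≤ dep t := by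
  obtain ⟨p, hp⟩ := walkToRoot hdep0 hdep (dep t) t le_rfl
  calc (pGraph par).dist root t = (pGraph par).dist t root := dist_comm
  _ ≤ p.length := dist_le p
  _ = dep t := hp

end Parent

/-! ### Reachability avoiding a set of vertices -/

section Reach
variable {α : Type*} (T : SimpleGraph α)

/-- Reachability avoiding a set `S` of vertices. -/
def AReach (S : Set α) (a b : α) : Prop :=
  Relation.ReflTransGen (fun x y => T.Adj x y ∧ x ∉ S ∧ y ∉ S) a b

variable {T} {S S' : Set α} {a b c : α}

@[refl] lemma AReach.refl : AReach T S a a := Relation.ReflTransGen.refl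

lemma AReach.symm (h : AReach T S a b) : AReach T S b a :=
  haveI : Std.Symm (fun x y : α => T.Adj x y ∧ x ∉ S ∧ y ∉ S) :=
    ⟨fun _ _ hxy => ⟨hxy.1.symm, hxy.2.2, hxy.2.1⟩⟩
  Std.Symm.symm (r := Relation.ReflTransGen (fun x y : α => T.Adj x y ∧ x ∉ S ∧ y ∉ S)) _ _ h

lemma AReach.trans (h : AReach T S a b) (h' : AReach T S b c) : AReach T S a c :=
  Relation.ReflTransGen.trans h h'

lemma AReach.mono (hS : S' ⊆ S) (h : AReach T S a b) : AReach T S' a b :=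
  Relation.ReflTransGen.mono (p := fun x y : α => T.Adj x y ∧ x ∉ S' ∧ y ∉ S') (fun _ _ hxy => ⟨hxy.1, fun hx => hxy.2.1 (hS hx),
    fun hy => hxy.2.2 (hS hy)⟩) _ _ h

lemma AReach.notMem_right (ha : a ∉ S) (h : AReach T S a b) : b ∉ S := by
  induction h with
  | refl => exact ha
  | tail _ hstep _ => exact hstep.2.2

lemma AReach.of_walk (p : T.Walk a b) (h : ∀ x ∈ p.support, x ∉ S) : AReach T S a b := by
  induction p with
  | nil => exact AReach.refl
  | cons hadj q ih =>
    rename_i u v w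
    refine Relation.ReflTransGen.head ⟨hadj, ?_, ?_⟩ (ih ?_)
    · exact h u (by simp)
    · exact h v (by simp [Walk.support_cons, q.start_mem_support])
    · intro x hx
      exact h x (by simp [Walk.support_cons, hx])

lemma AReach.exists_walk (h : AReach T S a b) (ha : a ∉ S) :
    ∃ p : T.Walk a b, ∀ x ∈ p.support, x ∉ S := by
  induction h with
  | refl => exact ⟨Walk.nil, by simpa using ha⟩
  | tail hab hstep ih =>
    obtain ⟨p, hp⟩ := ih
    refine ⟨p.concat hstep.1, ?_⟩
    intro x hx
    rw [Walk.support_concat, List.mem_append] at hx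
    rcases hx with hx | hx
    · exact hp x hx
    · simp only [List.mem_singleton] at hx
      exact hx ▸ hstep.2.2

lemma AReach.adj (hadj : T.Adj a b) (ha : a ∉ S) (hb : b ∉ S) : AReach T S a b :=
  Relation.ReflTransGen.single ⟨hadj, ha, hb⟩

end Reach

/-! ### Centroids of weighted trees -/

section Centroid
variable {ι : Type*} {T : SimpleGraph ι}

lemma uniqNbr (hT : T.IsTree) {t u u' : ι} (hu : T.Adj t u) (hu' : T.Adj t u')
    (hr : AReach T {t} u u') : u = u' := by
  obtain ⟨p, hp⟩ := hr.exists_walk (by simpa using hu.ne')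
  have hbp : p.bypass.IsPath := p.bypass_isPath
  have hbt : t ∉ p.bypass.support := fun ht =>
    (hp t (p.support_bypass_subset ht)) rfl
  have h2 : (Walk.cons hu p.bypass).IsPath := by
    rw [Walk.cons_isPath_iff]
    exact ⟨hbp, hbt⟩
  have h1 : (Walk.cons hu' Walk.nil).IsPath := by
    simp [Walk.cons_isPath_iff, hu'.ne]
  have := hT.IsAcyclic.path_unique ⟨Walk.cons hu' Walk.nil, h1⟩ ⟨Walk.cons hu p.bypass, h2⟩
  have hlen := congrArg (fun q : T.Path t u' => q.1.length) this
  simp only [Walk.length_cons, Walk.length_nil] at hlen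
  exact Walk.eq_of_length_eq_zero (p := p.bypass) (by omega)

lemma dist_side (hT : T.IsTree) {t u j : ι} (hadj : T.Adj t u)
    (hj : AReach T ({t} : Set ι) u j) : T.dist u j + 1 = T.dist t j := by
  have hjt : j ≠ t := by
    have := hj.notMem_right (by simpa using hadj.ne')
    simpa using this
  have hub : T.dist t j ≤ T.dist u j + 1 := by
    obtain ⟨w, hw⟩ := (hT.isConnected u j).exists_walk_length_eq_dist
    have := dist_le (Walk.cons hadj w)
    simpa [hw] using this
  obtain ⟨p, hp, hlen⟩ := (hT.isConnected t j).exists_path_of_dist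
  cases p with
  | nil => exact absurd rfl hjt.symm
  | @cons _ u' _ h q =>
    rw [Walk.cons_isPath_iff] at hp
    have hq : AReach T ({t} : Set ι) u' j := by
      refine AReach.of_walk q ?_
      intro x hx
      simp only [Set.mem_singleton_iff]
      rintro rfl
      exact hp.2 hx
    have huu' : u = u' := uniqNbr hT hadj h (hj.trans hq.symm)
    subst huu'
    have : T.dist u j ≤ q.length := dist_le q
    simp only [Walk.length_cons] at hlen
    omega

lemma dist_off (hT : T.IsTree) {t u j : ι} (hadj : T.Adj t u)
    (hj : ¬ AReach T ({t} : Set ι) u j) : T.dist u j = T.dist t j + 1 := by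
  rcases eq_or_ne j t with rfl | hjt
  · rw [dist_comm, dist_eq_one_iff_adj.mpr hadj, dist_self]
  · obtain ⟨w, hw⟩ := (hT.isConnected u j).exists_walk_length_eq_dist
    have ht : t ∈ w.support := by
      by_contra ht
      exact hj (AReach.of_walk w (fun x hx => by
        simp only [Set.mem_singleton_iff]
        rintro rfl
        exact ht hx))
    have hsplit := w.take_spec ht
    have hlen : (w.takeUntil t ht).length + (w.dropUntil t ht).length = w.length := by
      have := congrArg Walk.length hsplit
      rwa [Walk.length_append] at this
    have h1 : T.dist u t ≤ (w.takeUntil t ht).length := dist_le _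
    have h2 : T.dist t j ≤ (w.dropUntil t ht).length := dist_le _
    have hut : T.dist u t = 1 := dist_eq_one_iff_adj.mpr hadj.symm
    have hub : T.dist u j ≤ T.dist t j + 1 := by
      obtain ⟨w', hw'⟩ := (hT.isConnected t j).exists_walk_length_eq_dist
      have := dist_le (Walk.cons hadj.symm w')
      simpa [hw'] using this
    omega

lemma exists_centroid [Fintype ι] (hT : T.IsTree) (ω : ι → ℕ) :
    ∃ t0 : ι, ∀ x : ι, x ≠ t0 →
      2 * ∑ j ∈ Finset.univ.filter (fun j => AReach T ({t0} : Set ι) x j), ω j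
        ≤ ∑ j, ω j := by
  classical
  have : Nonempty ι := hT.isConnected.nonempty
  obtain ⟨t0, -, hmin⟩ := Finset.exists_min_image Finset.univ
    (fun t => ∑ j, ω j * T.dist t j) Finset.univ_nonempty
  refine ⟨t0, ?_⟩
  have key : ∀ u : ι, T.Adj t0 u →
      2 * ∑ j ∈ Finset.univ.filter (fun j => AReach T ({t0} : Set ι) u j), ω j
        ≤ ∑ j, ω j := by
    intro u hadj
    set A := Finset.univ.filter (fun j => AReach T ({t0} : Set ι) u j) with hA
    have hsplit : ∑ j ∈ A, ω j + ∑ j ∈ Finset.univ.filter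
        (fun j => ¬ AReach T ({t0} : Set ι) u j), ω j = ∑ j, ω j :=
      Finset.sum_filter_add_sum_filter_not _ _ _
    set Ac := Finset.univ.filter (fun j => ¬ AReach T ({t0} : Set ι) u j) with hAc
    have heq : (∑ j, ω j * T.dist u j) + ∑ j ∈ A, ω j
        = (∑ j, ω j * T.dist t0 j) + ∑ j ∈ Ac, ω j := by
      have hFu : ∑ j, ω j * T.dist u j
          = ∑ j ∈ A, ω j * T.dist u j + ∑ j ∈ Ac, ω j * T.dist u j :=
        (Finset.sum_filter_add_sum_filter_not _ _ _).symm
      have hFt : ∑ j, ω j * T.dist t0 j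
          = ∑ j ∈ A, ω j * T.dist t0 j + ∑ j ∈ Ac, ω j * T.dist t0 j :=
        (Finset.sum_filter_add_sum_filter_not _ _ _).symm
      have hA1 : ∑ j ∈ A, ω j * T.dist u j + ∑ j ∈ A, ω j
          = ∑ j ∈ A, ω j * T.dist t0 j := by
        rw [← Finset.sum_add_distrib]
        refine Finset.sum_congr rfl ?_
        intro j hj
        rw [hA, Finset.mem_filter] at hj
        have := dist_side hT hadj hj.2
        calc ω j * T.dist u j + ω j = ω j * (T.dist u j + 1) := by ring
        _ = ω j * T.dist t0 j := by rw [this]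
      have hA2 : ∑ j ∈ Ac, ω j * T.dist u j
          = ∑ j ∈ Ac, ω j * T.dist t0 j + ∑ j ∈ Ac, ω j := by
        rw [← Finset.sum_add_distrib]
        refine Finset.sum_congr rfl ?_
        intro j hj
        rw [hAc, Finset.mem_filter] at hj
        have := dist_off hT hadj hj.2
        calc ω j * T.dist u j = ω j * (T.dist t0 j + 1) := by rw [this]
        _ = ω j * T.dist t0 j + ω j := by ring
      rw [hFu, hFt]
      omega
    have hle := hmin u (Finset.mem_univ u)
    omega
  intro x hx
  obtain ⟨p, hp, -⟩ := (hT.isConnected t0 x).exists_path_of_dist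
  cases p with
  | nil => exact absurd rfl hx
  | @cons _ u _ h q =>
    rw [Walk.cons_isPath_iff] at hp
    have hux : AReach T ({t0} : Set ι) u x := by
      refine AReach.of_walk q ?_
      intro y hy
      simp only [Set.mem_singleton_iff]
      rintro rfl
      exact hp.2 hy
    have hsets : Finset.univ.filter (fun j => AReach T ({t0} : Set ι) x j)
        = Finset.univ.filter (fun j => AReach T ({t0} : Set ι) u j) := by
      ext j
      simp only [Finset.mem_filter, Finset.mem_univ, true_and]
      exact ⟨fun hxy => hux.trans hxy, fun huy => hux.symm.trans huy⟩
    rw [hsets]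
    exact key u h

end Centroid

/-! ### Balanced separators from tree decompositions -/

section Decomp

variable {V : Type*} [Fintype V] {G : SimpleGraph V} (D : TreeDecomposition G)

/-- a choice of a bag containing each vertex -/
noncomputable def phi (v : V) : D.ι := (D.bag_cover v).choose

lemma phi_spec (v : V) : v ∈ D.bag (phi D v) := (D.bag_cover v).choose_spec

lemma nodes_reach (t0 : D.ι) {v : V} (hv : v ∉ D.bag t0) {t t' : D.ι}
    (ht : v ∈ D.bag t) (ht' : v ∈ D.bag t') : AReach D.tree ({t0} : Set D.ι) t t' := by
  obtain ⟨p, hp, -⟩ := (D.tree_isTree.isConnected t t').exists_path_of_dist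
  refine AReach.of_walk p ?_
  intro x hx
  simp only [Set.mem_singleton_iff]
  exact fun hxe => hv (hxe ▸ D.bag_path t t' x p hp hx ⟨ht, ht'⟩)

lemma graph_reach (t0 : D.ι) {x y : V} (hx : x ∉ D.bag t0)
    (hr : AReach G (D.bag t0) x y) :
    AReach D.tree ({t0} : Set D.ι) (phi D x) (phi D y) := by
  induction hr with
  | refl => exact AReach.refl
  | tail hab hstep ih =>
    rename_i b' c'
    obtain ⟨s, hs1, hs2⟩ := D.bag_adj hstep.1
    refine ih.trans (AReach.trans (b := s) ?_ ?_)
    · exact nodes_reach D t0 hstep.2.1 (phi_spec D b') hs1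
    · exact nodes_reach D t0 hstep.2.2 hs2 (phi_spec D c')

lemma cent (A : Set V) :
    ∃ t0 : D.ι, ∀ x : V, x ∉ D.bag t0 →
      2 * ({y | AReach G (D.bag t0) x y} ∩ A).ncard ≤ A.ncard := by
  haveI : Fintype D.ι := D.instFintype
  set ω : D.ι → ℕ := fun j => (A.toFinset.filter (fun v => phi D v = j)).card with hω
  obtain ⟨t0, ht0⟩ := exists_centroid D.tree_isTree ω
  refine ⟨t0, ?_⟩
  intro x hx
  have hphix : phi D x ≠ t0 := fun h => hx (h ▸ phi_spec D x)
  have htot : ∑ j, ω j = A.ncard := by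
    rw [hω, ← Finset.card_eq_sum_card_fiberwise (fun v _ => Finset.mem_univ (phi D v)),
      Set.ncard_eq_toFinset_card']
  set B := A.toFinset.filter (fun v => AReach G (D.bag t0) x v) with hB
  have hBcard : ({y | AReach G (D.bag t0) x y} ∩ A).ncard = B.card := by
    rw [Set.ncard_eq_toFinset_card']
    congr 1
    ext v
    simp [hB, Set.mem_toFinset, and_comm]
  have hfib : ∀ v ∈ B, phi D v ∈ Finset.univ.filter
      (fun j => AReach D.tree ({t0} : Set D.ι) (phi D x) j) := by
    intro v hv
    rw [hB, Finset.mem_filter] at hv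
    simp only [Finset.mem_filter, Finset.mem_univ, true_and]
    exact graph_reach D t0 hx hv.2
  have hBsum : B.card ≤ ∑ j ∈ Finset.univ.filter
      (fun j => AReach D.tree ({t0} : Set D.ι) (phi D x) j), ω j := by
    rw [Finset.card_eq_sum_card_fiberwise hfib]
    refine Finset.sum_le_sum ?_
    intro j hj
    refine Finset.card_le_card ?_
    intro v hv
    rw [Finset.mem_filter] at hv ⊢
    rw [hB, Finset.mem_filter] at hv
    exact ⟨hv.1.1, hv.2⟩
  have := ht0 (phi D x) hphix
  omega

lemma sep (C Z : Set V) :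
    ∃ S : Set V, (∃ t1 t2 : D.ι, S = D.bag t1 ∪ D.bag t2) ∧
      ∀ x, x ∉ S →
        2 * ({y | AReach G S x y} ∩ C).ncard ≤ C.ncard ∧
        2 * ({y | AReach G S x y} ∩ Z).ncard ≤ Z.ncard := by
  obtain ⟨t1, ht1⟩ := cent D C
  obtain ⟨t2, ht2⟩ := cent D Z
  refine ⟨D.bag t1 ∪ D.bag t2, ⟨t1, t2, rfl⟩, ?_⟩
  intro x hx
  have hx1 : x ∉ D.bag t1 := fun h => hx (Or.inl h)
  have hx2 : x ∉ D.bag t2 := fun h => hx (Or.inr h)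
  constructor
  · calc 2 * ({y | AReach G (D.bag t1 ∪ D.bag t2) x y} ∩ C).ncard
        ≤ 2 * ({y | AReach G (D.bag t1) x y} ∩ C).ncard := by
          have hsub : {y | AReach G (D.bag t1 ∪ D.bag t2) x y} ∩ C
              ⊆ {y | AReach G (D.bag t1) x y} ∩ C := by
            intro y hy
            exact ⟨AReach.mono Set.subset_union_left hy.1, hy.2⟩
          have := Set.ncard_le_ncard hsub (Set.toFinite _)
          omega
    _ ≤ C.ncard := ht1 x hx1
  · calc 2 * ({y | AReach G (D.bag t1 ∪ D.bag t2) x y} ∩ Z).ncard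
        ≤ 2 * ({y | AReach G (D.bag t2) x y} ∩ Z).ncard := by
          have hsub : {y | AReach G (D.bag t1 ∪ D.bag t2) x y} ∩ Z
              ⊆ {y | AReach G (D.bag t2) x y} ∩ Z := by
            intro y hy
            exact ⟨AReach.mono Set.subset_union_right hy.1, hy.2⟩
          have := Set.ncard_le_ncard hsub (Set.toFinite _)
          omega
    _ ≤ Z.ncard := ht2 x hx2

end Decomp

/-! ### Arithmetic and representative helpers -/

lemma clog_step {m' m : ℕ} (h1 : 1 ≤ m') (h2 : 2 * m' ≤ m) :
    Nat.clog 2 m' + 1 ≤ Nat.clog 2 m := by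
  rcases eq_or_lt_of_le h1 with h1' | h1'
  · rw [← h1', Nat.clog_one_right]
    have : 2 ≤ m := by omega
    have := Nat.clog_pos (b := 2) one_lt_two this
    omega
  · have hm' : 1 < m' := h1'
    have hpow : 2 ^ (Nat.clog 2 m' - 1) < m' := Nat.pow_pred_clog_lt_self one_lt_two hm'
    have hpos : 0 < Nat.clog 2 m' := Nat.clog_pos one_lt_two hm'
    have hpow2 : 2 ^ Nat.clog 2 m' < m := by
      have : 2 ^ Nat.clog 2 m' = 2 * 2 ^ (Nat.clog 2 m' - 1) := by
        conv_lhs => rw [show Nat.clog 2 m' = (Nat.clog 2 m' - 1) + 1 by omega]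
        ring
      omega
    have := (Nat.lt_clog_iff_pow_lt one_lt_two).mpr hpow2
    omega

/-- Canonical representatives for an assignment of classes. -/
lemma exists_rep {V : Type*} [Fintype V] (cls : V → Set V) (hne : ∀ x, (cls x).Nonempty) :
    ∃ rep : V → V, (∀ x, rep x ∈ cls x) ∧ (∀ x y, cls x = cls y → rep x = rep y) := by
  classical
  set eqv := Fintype.equivFin V with heqv
  have hfne : ∀ s : Set V, s.Nonempty → (s.toFinset.image eqv).Nonempty := by
    intro s hs
    obtain ⟨a, ha⟩ := hs
    exact ⟨eqv a, Finset.mem_image_of_mem _ (Set.mem_toFinset.mpr ha)⟩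
  have hmin' : ∀ (s t : Finset (Fin (Fintype.card V))) (hs : s.Nonempty) (ht : t.Nonempty),
      s = t → s.min' hs = t.min' ht := by
    rintro s t hs ht rfl
    rfl
  refine ⟨fun x => eqv.symm (((cls x).toFinset.image eqv).min' (hfne _ (hne x))), ?_, ?_⟩
  · intro x
    dsimp only
    have := Finset.min'_mem ((cls x).toFinset.image eqv) (hfne _ (hne x))
    obtain ⟨a, ha, hae⟩ := Finset.mem_image.mp this
    rw [← hae, Equiv.symm_apply_apply]
    exact Set.mem_toFinset.mp ha
  · intro x y hxy
    dsimp only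
    congr 1
    apply hmin'
    rw [hxy]


/-! ### Rooted tree decompositions of bounded depth -/

/-- A rooted partial tree decomposition datum. -/
structure PRT {V : Type*} [Fintype V] (G : SimpleGraph V) (w : ℕ) (C Z : Set V) where
  ι : Type
  ft : Fintype ι
  root : ι
  par : ι → ι
  dep : ι → ℕ
  bag : ι → Set V
  hpar_root : par root = root
  hdep_root : dep root = 0
  hdep : ∀ t, t ≠ root → dep (par t) + 1 = dep t
  hdep_le : ∀ t, dep t ≤ Nat.clog 2 C.ncard
  hbag_sub : ∀ t, bag t ⊆ C ∪ Z
  hbag_card : ∀ t, (bag t).ncard ≤ 6 * w + 6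
  hroot_bag : Z ⊆ bag root
  hcover : ∀ v ∈ C, ∃ t, v ∈ bag t
  hedge : ∀ ⦃u v : V⦄, G.Adj u v → u ∈ C → ∃ t, u ∈ bag t ∧ v ∈ bag t
  hconn : ∀ (v : V) (t1 t2 : ι), v ∈ bag t1 → v ∈ bag t2 →
    ∃ p : (pGraph par).Walk t1 t2, ∀ s ∈ p.support, v ∈ bag s

lemma build {V : Type*} [Fintype V] {G : SimpleGraph V} (D : TreeDecomposition G) (w : ℕ)
    (hD : ∀ t : D.ι, (D.bag t).ncard ≤ w + 1) :
    ∀ (n : ℕ) (C Z : Set V), C.ncard ≤ n → Z.ncard ≤ 4 * w + 4 → Disjoint C Z →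
      (∀ ⦃u v : V⦄, G.Adj u v → u ∈ C → v ∈ C ∪ Z) → Nonempty (PRT G w C Z) := by
  intro n
  induction n using Nat.strong_induction_on with
  | _ n ih =>
  intro C Z hCn hZcard hdisj hnbr
  rcases eq_or_ne C ∅ with rfl | hCne
  · -- leaf node
    refine ⟨⟨PUnit, inferInstance, PUnit.unit, id, fun _ => 0, fun _ => Z, rfl, rfl,
      ?_, ?_, ?_, ?_, ?_, ?_, ?_, ?_⟩⟩
    · intro t ht; exact absurd (Subsingleton.elim t _) ht
    · intro t; exact Nat.zero_le _
    · intro t; exact Set.subset_union_right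
    · intro t; exact le_trans hZcard (by omega)
    · exact subset_rfl
    · intro v hv; exact absurd hv (Set.notMem_empty v)
    · intro u v hadj hu; exact absurd hu (Set.notMem_empty u)
    · intro v t1 t2 hv1 hv2
      have ht : t1 = t2 := Subsingleton.elim _ _
      subst ht
      exact ⟨Walk.nil, fun s _ => hv1⟩
  · -- internal node
    obtain ⟨S, ⟨tS1, tS2, hSdef⟩, hbal⟩ := sep D C Z
    have hScard : S.ncard ≤ 2 * w + 2 := by
      rw [hSdef]
      calc (D.bag tS1 ∪ D.bag tS2).ncard ≤ (D.bag tS1).ncard + (D.bag tS2).ncard :=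
        Set.ncard_union_le _ _
      _ ≤ 2 * w + 2 := by have := hD tS1; have := hD tS2; omega
    have hCpos : 0 < C.ncard :=
      (Set.ncard_pos (Set.toFinite _)).mpr (Set.nonempty_iff_ne_empty.mpr hCne)
    set comp : V → Set V := fun x => {y | AReach G S x y} with hcomp
    set F : Set V := C \ S with hF
    set cls : V → Set V := fun x => if x ∈ F then comp x ∩ F else {x} with hcls
    have hclsne : ∀ x, (cls x).Nonempty := by
      intro x
      rw [hcls]
      dsimp only
      split_ifs with hx
      · exact ⟨x, AReach.refl, hx⟩
      · exact ⟨x, rfl⟩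
    obtain ⟨rep, hrep_mem, hrep_congr⟩ := exists_rep cls hclsne
    have hcomp_congr : ∀ x y, AReach G S x y → comp x = comp y := by
      intro x y hxy
      ext z
      exact ⟨fun hz => hxy.symm.trans hz, fun hz => hxy.trans hz⟩
    have hcls_congr : ∀ x y, x ∈ F → y ∈ F → AReach G S x y → cls x = cls y := by
      intro x y hx hy hxy
      rw [hcls]
      dsimp only
      rw [if_pos hx, if_pos hy, hcomp_congr x y hxy]
    have hrepF : ∀ x, x ∈ F → rep x ∈ comp x ∩ F := by
      intro x hx
      have h := hrep_mem x
      rw [hcls] at h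
      dsimp only at h
      rwa [if_pos hx] at h
    have hrep_reach : ∀ x, x ∈ F → AReach G S x (rep x) := fun x hx => (hrepF x hx).1
    have hrep_fix : ∀ x, x ∈ F → rep (rep x) = rep x := by
      intro x hx
      have h1 := hrepF x hx
      exact hrep_congr (rep x) x (hcls_congr _ _ h1.2 hx (hrep_reach x hx).symm)
    set Reps : Finset V := F.toFinset.image rep with hReps
    set k := Reps.card with hk
    set er := Reps.equivFin with her
    set r : Fin k → V := fun i => (er.symm i : V) with hr
    have hrReps : ∀ i, r i ∈ Reps := fun i => (er.symm i).2
    have hRepsF : ∀ a ∈ Reps, a ∈ F ∧ rep a = a := by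
      intro a ha
      rw [hReps] at ha
      obtain ⟨x, hx, hxa⟩ := Finset.mem_image.mp ha
      have hxF : x ∈ F := Set.mem_toFinset.mp hx
      have h1 := hrepF x hxF
      constructor
      · exact hxa ▸ h1.2
      · rw [← hxa]
        exact hrep_fix x hxF
    have hrF : ∀ i, r i ∈ F := fun i => (hRepsF _ (hrReps i)).1
    have hrS : ∀ i, r i ∉ S := fun i => (hrF i).2
    have hrC : ∀ i, r i ∈ C := fun i => (hrF i).1
    have hr_inj : ∀ i j, r i = r j → i = j := by
      intro i j hij
      rw [hr] at hij
      have h2 : er.symm i = er.symm j := Subtype.ext hij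
      exact er.symm.injective h2
    have hcomp_disj : ∀ i j, i ≠ j → ∀ y, y ∈ comp (r i) → y ∈ comp (r j) → False := by
      intro i j hij y h1 h2
      have hreach : AReach G S (r i) (r j) := AReach.trans h1 (AReach.symm h2)
      have hcc := hcls_congr _ _ (hrF i) (hrF j) hreach
      have hrr := hrep_congr _ _ hcc
      rw [(hRepsF _ (hrReps i)).2, (hRepsF _ (hrReps j)).2] at hrr
      exact hij (hr_inj _ _ hrr)
    set CK : Fin k → Set V := fun i => comp (r i) ∩ C with hCK
    set ZK : Fin k → Set V := fun i => (S ∩ (C ∪ Z)) ∪ (Z ∩ comp (r i)) with hZK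
    have hmemS : ∀ i, ∀ y ∈ comp (r i), y ∉ S := fun i y hy =>
      AReach.notMem_right (hrS i) hy
    have hCK_sub : ∀ i, CK i ⊆ C := fun i => Set.inter_subset_right
    have hCK_half : ∀ i, 2 * (CK i).ncard ≤ C.ncard := fun i => (hbal (r i) (hrS i)).1
    have hCK_mem : ∀ i, r i ∈ CK i := fun i => ⟨AReach.refl, hrC i⟩
    have hCK_pos : ∀ i, 1 ≤ (CK i).ncard := fun i =>
      (Set.ncard_pos (Set.toFinite _)).mpr ⟨r i, hCK_mem i⟩
    have hCK_lt : ∀ i, (CK i).ncard < n := by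
      intro i
      have h1 := hCK_half i
      have h2 := hCK_pos i
      omega
    have hZK_card : ∀ i, (ZK i).ncard ≤ 4 * w + 4 := by
      intro i
      have h1 : (S ∩ (C ∪ Z)).ncard ≤ S.ncard :=
        Set.ncard_le_ncard Set.inter_subset_left (Set.toFinite _)
      have h2 : 2 * (Z ∩ comp (r i)).ncard ≤ Z.ncard := by
        have h := (hbal (r i) (hrS i)).2
        rwa [Set.inter_comm] at h
      have h3 : (ZK i).ncard ≤ (S ∩ (C ∪ Z)).ncard + (Z ∩ comp (r i)).ncard :=
        Set.ncard_union_le _ _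
      omega
    have hZCK_disj : ∀ i, Disjoint (CK i) (ZK i) := by
      intro i
      rw [Set.disjoint_left]
      intro a ha
      have haC : a ∈ C := ha.2
      have haS : a ∉ S := hmemS i a ha.1
      have haZ : a ∉ Z := fun h => (Set.disjoint_left.mp hdisj) haC h
      rintro (h | h)
      · exact haS h.1
      · exact haZ h.1
    have hnbrK : ∀ i, ∀ ⦃u v : V⦄, G.Adj u v → u ∈ CK i → v ∈ CK i ∪ ZK i := by
      intro i u v hadj hu
      have huC : u ∈ C := hu.2
      have huS : u ∉ S := hmemS i u hu.1
      have hvCZ : v ∈ C ∪ Z := hnbr hadj huC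
      by_cases hvS : v ∈ S
      · exact Or.inr (Or.inl ⟨hvS, hvCZ⟩)
      · have hvcomp : v ∈ comp (r i) := Relation.ReflTransGen.tail hu.1 ⟨hadj, huS, hvS⟩
        rcases hvCZ with hvC | hvZ
        · exact Or.inl ⟨hvcomp, hvC⟩
        · exact Or.inr (Or.inr ⟨hvZ, hvcomp⟩)
    have hchild : ∀ i : Fin k, Nonempty (PRT G w (CK i) (ZK i)) := fun i =>
      ih (CK i).ncard (hCK_lt i) (CK i) (ZK i) le_rfl (hZK_card i) (hZCK_disj i) (hnbrK i)
    set child : (i : Fin k) → PRT G w (CK i) (ZK i) := fun i => (hchild i).some with hchild'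
    haveI : ∀ i, Fintype (child i).ι := fun i => (child i).ft
    -- the glued structure
    set ι' := Option ((i : Fin k) × (child i).ι) with hι'
    set par' : ι' → ι' := fun t => Option.elim t none
      (fun p => if p.2 = (child p.1).root then none else some ⟨p.1, (child p.1).par p.2⟩)
      with hpar'
    set dep' : ι' → ℕ := fun t => Option.elim t 0 (fun p => (child p.1).dep p.2 + 1) with hdep'
    set bag' : ι' → Set V := fun t => Option.elim t (Z ∪ (S ∩ (C ∪ Z)))
      (fun p => (child p.1).bag p.2) with hbag'
    -- membership of a vertex in some component
    have hindex : ∀ v, v ∈ F → ∃ i, v ∈ CK i := by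
      intro v hvF
      have hmem : rep v ∈ Reps := by
        rw [hReps]
        exact Finset.mem_image_of_mem rep (Set.mem_toFinset.mpr hvF)
      refine ⟨er ⟨rep v, hmem⟩, ?_, (hF ▸ hvF).1⟩
      have hri : r (er ⟨rep v, hmem⟩) = rep v :=
        congrArg Subtype.val (er.symm_apply_apply ⟨rep v, hmem⟩)
      rw [hri]
      exact (hrep_reach v hvF).symm
    -- homomorphism facts
    have hhom : ∀ (i : Fin k) (a b : (child i).ι), (pGraph (child i).par).Adj a b →
        (pGraph par').Adj (some ⟨i, a⟩ : ι') (some ⟨i, b⟩) := by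
      intro i a b hab
      obtain ⟨hne, hor⟩ := hab
      refine ⟨fun hcon => hne (eq_of_heq (Sigma.mk.inj_iff.mp (Option.some.inj hcon)).2), ?_⟩
      rcases hor with h | h
      · left
        have haroot : a ≠ (child i).root := by
          rintro rfl
          rw [(child i).hpar_root] at h
          exact hne h
        show Option.elim _ _ _ = _
        dsimp only [Option.elim]
        rw [if_neg haroot, h]
      · right
        have hbroot : b ≠ (child i).root := by
          rintro rfl
          rw [(child i).hpar_root] at h
          exact hne h.symm
        show Option.elim _ _ _ = _
        dsimp only [Option.elim]
        rw [if_neg hbroot, h]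
    have hlift : ∀ (i : Fin k) (a b : (child i).ι) (q : (pGraph (child i).par).Walk a b),
        ∃ q' : (pGraph par').Walk (some ⟨i, a⟩ : ι') (some ⟨i, b⟩),
          ∀ x ∈ q'.support, ∃ s ∈ q.support, x = some ⟨i, s⟩ := by
      intro i a b q
      induction q with
      | nil =>
        refine ⟨Walk.nil, ?_⟩
        intro x hx
        simp only [Walk.support_nil, List.mem_singleton] at hx
        exact ⟨_, by simp, hx⟩
      | cons h q ihq =>
        rename_i a' b' c'
        obtain ⟨q', hq'⟩ := ihq
        refine ⟨Walk.cons (hhom i _ _ h) q', ?_⟩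
        intro x hx
        rw [Walk.support_cons] at hx
        rcases List.mem_cons.mp hx with hx | hx
        · exact ⟨a', by simp [Walk.support_cons], hx⟩
        · obtain ⟨s, hs, hxs⟩ := hq' x hx
          exact ⟨s, by simp [Walk.support_cons, hs], hxs⟩
    have hadjroot : ∀ i : Fin k,
        (pGraph par').Adj (some ⟨i, (child i).root⟩ : ι') none := by
      intro i
      refine ⟨by simp, Or.inl ?_⟩
      show Option.elim _ _ _ = _
      dsimp only [Option.elim]
      rw [if_pos rfl]
    have hZK_bag : ∀ (i : Fin k) (s : (child i).ι) (v : V), v ∈ (child i).bag s →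
        v ∈ Z ∪ (S ∩ (C ∪ Z)) → v ∈ ZK i := by
      intro i s v hvb hvroot
      rcases hvroot with hvZ | hvS
      · rcases (child i).hbag_sub s hvb with hvCK | hvZK
        · exact absurd hvZ (fun h => Set.disjoint_left.mp hdisj (hCK_sub i hvCK) h)
        · exact hvZK
      · exact Or.inl hvS
    have hwalk_root : ∀ (i : Fin k) (s : (child i).ι) (v : V), v ∈ (child i).bag s →
        v ∈ Z ∪ (S ∩ (C ∪ Z)) →
        ∃ W : (pGraph par').Walk (some ⟨i, s⟩ : ι') none, ∀ x ∈ W.support, v ∈ bag' x := by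
      intro i s v hvb hvroot
      have hvZK := hZK_bag i s v hvb hvroot
      obtain ⟨q, hq⟩ := (child i).hconn v s (child i).root hvb ((child i).hroot_bag hvZK)
      obtain ⟨q', hq'⟩ := hlift i _ _ q
      refine ⟨q'.concat (hadjroot i), ?_⟩
      intro x hx
      rw [Walk.support_concat, List.mem_append] at hx
      rcases hx with hx | hx
      · obtain ⟨s', hs', rfl⟩ := hq' x hx
        exact hq s' hs'
      · simp only [List.mem_singleton] at hx
        subst hx
        exact hvroot
    refine ⟨⟨ι', inferInstance, none, par', dep', bag', rfl, rfl, ?_, ?_, ?_, ?_, ?_, ?_, ?_, ?_⟩⟩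
    · -- hdep
      rintro (_ | ⟨i, s⟩) ht
      · exact absurd rfl ht
      · by_cases hs : s = (child i).root
        · subst hs
          show dep' (Option.elim _ _ _) + 1 = _
          dsimp only [Option.elim]
          rw [if_pos rfl]
          show 0 + 1 = (child i).dep (child i).root + 1
          rw [(child i).hdep_root]
        · show dep' (Option.elim _ _ _) + 1 = _
          dsimp only [Option.elim]
          rw [if_neg hs]
          show ((child i).dep ((child i).par s) + 1) + 1 = (child i).dep s + 1
          have := (child i).hdep s hs
          omega
    · -- hdep_le
      rintro (_ | ⟨i, s⟩)
      · exact Nat.zero_le _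
      · have h1 := (child i).hdep_le s
        have h2 := clog_step (hCK_pos i) (le_trans (hCK_half i) hCn)
        show (child i).dep s + 1 ≤ _
        have h3 := clog_step (hCK_pos i) (hCK_half i)
        omega
    · -- hbag_sub
      rintro (_ | ⟨i, s⟩)
      · intro v hv
        rcases hv with hv | hv
        · exact Or.inr hv
        · exact hv.2
      · intro v hv
        rcases (child i).hbag_sub s hv with h | h
        · exact Or.inl (hCK_sub i h)
        · rcases h with h | h
          · exact h.2
          · exact Or.inr h.1
    · -- hbag_card
      rintro (_ | ⟨i, s⟩)
      · show (Z ∪ (S ∩ (C ∪ Z))).ncard ≤ 6 * w + 6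
        have h1 := Set.ncard_union_le Z (S ∩ (C ∪ Z))
        have h2 : (S ∩ (C ∪ Z)).ncard ≤ S.ncard :=
          Set.ncard_le_ncard Set.inter_subset_left (Set.toFinite _)
        omega
      · exact (child i).hbag_card s
    · -- hroot_bag
      exact Set.subset_union_left
    · -- hcover
      intro v hv
      by_cases hvS : v ∈ S
      · exact ⟨none, Or.inr ⟨hvS, Or.inl hv⟩⟩
      · obtain ⟨i, hvCK⟩ := hindex v ⟨hv, hvS⟩
        obtain ⟨t, ht⟩ := (child i).hcover v hvCK
        exact ⟨some ⟨i, t⟩, ht⟩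
    · -- hedge
      intro u v hadj huC
      by_cases huS : u ∈ S
      · have hvCZ := hnbr hadj huC
        by_cases hvS : v ∈ S
        · exact ⟨none, Or.inr ⟨huS, Or.inl huC⟩, Or.inr ⟨hvS, hvCZ⟩⟩
        · rcases hvCZ with hvC | hvZ
          · obtain ⟨i, hvCK⟩ := hindex v ⟨hvC, hvS⟩
            obtain ⟨t, ht1, ht2⟩ := (child i).hedge hadj.symm hvCK
            exact ⟨some ⟨i, t⟩, ht2, ht1⟩
          · exact ⟨none, Or.inr ⟨huS, Or.inl huC⟩, Or.inl hvZ⟩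
      · obtain ⟨i, huCK⟩ := hindex u ⟨huC, huS⟩
        obtain ⟨t, ht⟩ := (child i).hedge hadj huCK
        exact ⟨some ⟨i, t⟩, ht⟩
    · -- hconn
      intro v t1 t2 hv1 hv2
      rcases t1 with _ | ⟨i, s⟩ <;> rcases t2 with _ | ⟨j, s'⟩
      · refine ⟨Walk.nil, ?_⟩
        intro x hx
        simp only [Walk.support_nil, List.mem_singleton] at hx
        exact hx ▸ hv1
      · obtain ⟨W, hW⟩ := hwalk_root j s' v hv2 hv1
        refine ⟨W.reverse, ?_⟩
        intro x hx
        rw [Walk.support_reverse, List.mem_reverse] at hx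
        exact hW x hx
      · obtain ⟨W, hW⟩ := hwalk_root i s v hv1 hv2
        exact ⟨W, hW⟩
      · rcases eq_or_ne i j with rfl | hij
        · by_cases hss : s = s'
          · subst hss
            refine ⟨Walk.nil, ?_⟩
            intro x hx
            simp only [Walk.support_nil, List.mem_singleton] at hx
            exact hx ▸ hv1
          · obtain ⟨q, hq⟩ := (child i).hconn v s s' hv1 hv2
            obtain ⟨q', hq'⟩ := hlift i _ _ q
            refine ⟨q', ?_⟩
            intro x hx
            obtain ⟨s'', hs'', rfl⟩ := hq' x hx
            exact hq s'' hs''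
        · have h1 := (child i).hbag_sub s hv1
          have h2 := (child j).hbag_sub s' hv2
          have hvZZ : v ∈ ZK i ∧ v ∈ ZK j := by
            rcases h1 with h1 | h1
            · exfalso
              rcases h2 with h2 | h2
              · exact hcomp_disj i j hij v h1.1 h2.1
              · rcases h2 with h2 | h2
                · exact hmemS i v h1.1 h2.1
                · exact Set.disjoint_left.mp hdisj h1.2 h2.1
            · rcases h2 with h2 | h2
              · exfalso
                rcases h1 with h1 | h1
                · exact hmemS j v h2.1 h1.1
                · exact Set.disjoint_left.mp hdisj h2.2 h1.1
              · exact ⟨h1, h2⟩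
          have hvroot : v ∈ Z ∪ (S ∩ (C ∪ Z)) := by
            rcases hvZZ.1 with h | h
            · exact Or.inr h
            · exact Or.inl h.1
          obtain ⟨W1, hW1⟩ := hwalk_root i s v hv1 hvroot
          obtain ⟨W2, hW2⟩ := hwalk_root j s' v hv2 hvroot
          refine ⟨W1.append W2.reverse, ?_⟩
          intro x hx
          rw [Walk.support_append] at hx
          rcases List.mem_append.mp hx with hx | hx
          · exact hW1 x hx
          · have hx2 := List.mem_of_mem_tail hx
            rw [Walk.support_reverse, List.mem_reverse] at hx2
            exact hW2 x hx2

end ShallowTD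

/-- If a graph on `n ≥ 1` vertices has a tree decomposition with all bags of size
at most `w + 1`, then it has a rooted tree decomposition with all bags of size at
most `6w + 6` and depth at most `⌈log₂ n⌉` (every node is within distance
`⌈log₂ n⌉` of the root). -/
theorem exists_shallow_tree_decomposition {V : Type*} [Fintype V] (G : SimpleGraph V)
    (w : ℕ) (hn : 1 ≤ Fintype.card V)
    (h : ∃ D : TreeDecomposition G, ∀ t : D.ι, (D.bag t).ncard ≤ w + 1) :
    ∃ D : TreeDecomposition G, (∀ t : D.ι, (D.bag t).ncard ≤ 6 * w + 6) ∧
      ∃ root : D.ι, ∀ t : D.ι, D.tree.dist root t ≤ Nat.clog 2 (Fintype.card V) := by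
  classical
  obtain ⟨D, hD⟩ := h
  obtain ⟨P⟩ := ShallowTD.build D w hD ((Set.univ : Set V).ncard) Set.univ ∅ le_rfl
    (by simp) (by simp) (fun u v _ _ => by simp)
  haveI : Fintype P.ι := P.ft
  have htree := ShallowTD.pGraph_isTree P.hpar_root P.hdep_root P.hdep
  refine ⟨⟨P.ι, P.ft, ShallowTD.pGraph P.par, htree, P.bag, ?_, ?_, ?_⟩, ?_, P.root, ?_⟩
  · intro v
    exact P.hcover v (Set.mem_univ v)
  · intro u v hadj
    exact P.hedge hadj (Set.mem_univ u)
  · intro t1 t2 t3 p hp ht3 v hv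
    obtain ⟨q, hq⟩ := P.hconn v t1 t2 hv.1 hv.2
    have huniq := htree.IsAcyclic.path_unique ⟨p, hp⟩ ⟨q.bypass, q.bypass_isPath⟩
    have hpq : p = q.bypass := congrArg Subtype.val huniq
    rw [hpq] at ht3
    exact hq t3 (q.support_bypass_subset ht3)
  · intro t
    exact P.hbag_card t
  · intro t
    have h1 := ShallowTD.pGraph_dist_le P.hdep_root P.hdep t
    have h2 := P.hdep_le t
    have h3 : (Set.univ : Set V).ncard = Fintype.card V := by
      rw [Set.ncard_univ, Nat.card_eq_fintype_card]
    rw [h3] at h2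
    exact le_trans h1 h2
end

section
/- Let G be a finite simple graph that admits a tree decomposition in which every bag has at most w+1 vertices. Then for every subset U ⊆ V(G) there exists a set S ⊆ V(G) with |S| ≤ w+1 such that every connected component of the induced subgraph G[V(G) \ S] contains at most |U|/2 vertices of U. -/
namespace TDAux

open SimpleGraph

variable {ι : Type} {T : SimpleGraph ι}

/-- The set of vertices reachable from `s` by a walk avoiding the vertex `t`. -/
def Cut (T : SimpleGraph ι) (t s : ι) : Set ι := {x | ∃ p : T.Walk s x, t ∉ p.support}

lemma self_mem_cut {t s : ι} (h : t ≠ s) : s ∈ Cut T t s :=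
  ⟨SimpleGraph.Walk.nil, by simp [h]⟩

lemma not_mem_cut_self (t s : ι) : t ∉ Cut T t s := fun ⟨p, hp⟩ => hp p.end_mem_support

lemma cut_extend {t s x y : ι} (hx : x ∈ Cut T t s) (p : T.Walk x y) (hp : t ∉ p.support) :
    y ∈ Cut T t s := by
  obtain ⟨q, hq⟩ := hx
  refine ⟨q.append p, ?_⟩
  rw [SimpleGraph.Walk.support_append, List.mem_append]
  rintro (h | h)
  · exact hq h
  · exact hp (List.mem_of_mem_tail h)

lemma cut_disjoint (hT : T.IsTree) {t s : ι} (h : T.Adj t s) (x : ι)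
    (h1 : x ∈ Cut T t s) (h2 : x ∈ Cut T s t) : False := by
  obtain ⟨p, hp⟩ := h1
  obtain ⟨q, hq⟩ := h2
  have hbr := (isAcyclic_iff_forall_adj_isBridge.mp hT.IsAcyclic h)
  rw [SimpleGraph.isBridge_iff] at hbr
  refine hbr ?_
  have hedge : ∀ e ∈ (p.append q.reverse).edges, e ∉ ({s(t, s)} : Set (Sym2 ι)) := by
    intro e he hmem
    rw [Set.mem_singleton_iff] at hmem; subst hmem
    rw [SimpleGraph.Walk.edges_append, List.mem_append] at he
    rcases he with he | he
    · exact hp (p.fst_mem_support_of_mem_edges he)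
    · rw [SimpleGraph.Walk.edges_reverse, List.mem_reverse] at he
      exact hq (q.snd_mem_support_of_mem_edges he)
  exact ((p.append q.reverse).toDeleteEdges _ hedge).reachable.symm

lemma cut_step_one {t s y z : ι} (h : T.Adj t s) (hyz : T.Adj y z)
    (hy : y ∈ Cut T t s) : z ∈ Cut T t s ∨ z ∈ Cut T s t := by
  by_cases hz : z = t
  · subst hz
    exact Or.inr ⟨SimpleGraph.Walk.nil, by simp [h.ne']⟩
  · obtain ⟨p, hp⟩ := hy
    refine Or.inl ⟨p.append (SimpleGraph.Walk.cons hyz SimpleGraph.Walk.nil), ?_⟩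
    rw [SimpleGraph.Walk.support_append, List.mem_append]
    rintro (hh | hh)
    · exact hp hh
    · simp at hh
      exact hz hh.symm

lemma cut_walk (hT : T.IsTree) {t s : ι} (h : T.Adj t s) :
    ∀ {y z : ι} (p : T.Walk y z),
      (y ∈ Cut T t s ∨ y ∈ Cut T s t) → (z ∈ Cut T t s ∨ z ∈ Cut T s t) := by
  intro y z p
  induction p with
  | nil => exact id
  | cons h' q ih =>
    rintro (hy | hy)
    · exact ih (cut_step_one h h' hy)
    · exact ih ((cut_step_one h.symm h' hy).symm)

lemma cut_cover (hT : T.IsTree) {t s : ι} (h : T.Adj t s) (x : ι) :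
    x ∈ Cut T t s ∨ x ∈ Cut T s t := by
  obtain ⟨p⟩ := hT.isConnected.preconnected s x
  exact cut_walk hT h p (Or.inl (self_mem_cut h.ne))

lemma cut_subset (hT : T.IsTree) {t s r : ι} (hts : T.Adj t s) (hsr : T.Adj s r)
    (hrt : r ≠ t) : Cut T s r ⊆ Cut T t s := by
  classical
  rintro x ⟨q, hq⟩
  have ht : t ∉ q.support := by
    intro hmem
    have h1 : t ∈ Cut T s r :=
      ⟨q.takeUntil t hmem, fun hs => hq (q.support_takeUntil_subset _ hs)⟩
    have h2 : t ∈ Cut T r s := by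
      refine ⟨SimpleGraph.Walk.cons hts.symm SimpleGraph.Walk.nil, ?_⟩
      simp only [SimpleGraph.Walk.support_cons, SimpleGraph.Walk.support_nil,
        List.mem_cons, List.mem_singleton]
      rintro (h | h | h)
      · exact hsr.ne' h
      · exact hrt h
      · exact absurd h List.not_mem_nil
    exact cut_disjoint hT hsr t h1 h2
  refine ⟨SimpleGraph.Walk.cons hsr q, ?_⟩
  simp only [SimpleGraph.Walk.support_cons, List.mem_cons]
  rintro (h | h)
  · exact hts.ne h
  · exact ht h

lemma cut_branch_disjoint (hT : T.IsTree) {t s1 s2 : ι} (h1 : T.Adj t s1) (h2 : T.Adj t s2)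
    (hne : s1 ≠ s2) (x : ι) (hx1 : x ∈ Cut T t s1) (hx2 : x ∈ Cut T t s2) : False := by
  have hsub : Cut T t s2 ⊆ Cut T s1 t := cut_subset hT h1.symm h2 hne.symm
  exact cut_disjoint hT h1 x hx1 (hsub hx2)

lemma exists_branch (hT : T.IsTree) {t x : ι} (hx : x ≠ t) :
    ∃ s, T.Adj t s ∧ x ∈ Cut T t s := by
  obtain ⟨p, hp, -⟩ := hT.existsUnique_path t x
  cases p with
  | nil => exact absurd rfl hx
  | cons h' q =>
    rw [SimpleGraph.Walk.cons_isPath_iff] at hp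
    exact ⟨_, h', ⟨q, hp.2⟩⟩

end TDAux

open TDAux in
/-- If `G` has a tree decomposition of width `w` (bags of size at most `w + 1`),
then for every `U ⊆ V(G)` there is a set `S` of at most `w + 1` vertices such that
every connected component of `G[V \ S]` contains at most `|U|/2` vertices of `U`. -/
theorem exists_small_separator {V : Type*} [Fintype V] (G : SimpleGraph V) (w : ℕ)
    (h : ∃ D : TreeDecomposition G, ∀ t : D.ι, (D.bag t).ncard ≤ w + 1) (U : Set V) :
    ∃ S : Set V, S.ncard ≤ w + 1 ∧
      ∀ c : (G.induce (Sᶜ : Set V)).ConnectedComponent,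
        2 * {v : ↥(Sᶜ : Set V) |
          (G.induce (Sᶜ : Set V)).connectedComponentMk v = c ∧ (v : V) ∈ U}.ncard
            ≤ U.ncard := by
  classical
  obtain ⟨D, hD⟩ := h
  haveI := D.instFintype
  set T := D.tree with hTdef
  have hT := D.tree_isTree
  choose f hf using D.bag_cover
  set N := U.ncard with hN
  set wt : D.ι → D.ι → ℕ := fun t s => {u | u ∈ U ∧ f u ∈ Cut T t s}.ncard with hwt
  have hsum : ∀ {t s : D.ι}, T.Adj t s → wt t s + wt s t = N := by
    intro t s h
    have hdisj : Disjoint {u | u ∈ U ∧ f u ∈ Cut T t s} {u | u ∈ U ∧ f u ∈ Cut T s t} := by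
      rw [Set.disjoint_left]
      rintro u ⟨hu, h1⟩ ⟨-, h2⟩
      exact cut_disjoint hT h _ h1 h2
    have hunion : {u | u ∈ U ∧ f u ∈ Cut T t s} ∪ {u | u ∈ U ∧ f u ∈ Cut T s t} = U := by
      ext u
      simp only [Set.mem_union, Set.mem_setOf_eq]
      constructor
      · rintro (⟨hu, -⟩ | ⟨hu, -⟩) <;> exact hu
      · intro hu
        rcases cut_cover hT h (f u) with hc | hc
        · exact Or.inl ⟨hu, hc⟩
        · exact Or.inr ⟨hu, hc⟩
    rw [hwt]
    rw [← Set.ncard_union_eq hdisj (Set.toFinite _) (Set.toFinite _), hunion]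
  have hcentroid : ∃ t0 : D.ι, ∀ r, T.Adj t0 r → 2 * wt t0 r ≤ N := by
    by_cases hC : ∃ p : D.ι × D.ι, T.Adj p.1 p.2 ∧ N < 2 * wt p.1 p.2
    · obtain ⟨p0, hp0, hmin⟩ :=
        Set.exists_min_image {p : D.ι × D.ι | T.Adj p.1 p.2 ∧ N < 2 * wt p.1 p.2}
          (fun p => (Cut T p.1 p.2).ncard) (Set.toFinite _) hC
      obtain ⟨t, s⟩ := p0
      obtain ⟨hts, hgt⟩ := hp0
      simp only at hts hgt
      refine ⟨s, fun r hr => ?_⟩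
      by_contra hlt
      push_neg at hlt
      by_cases hrt : r = t
      · subst hrt
        have := hsum hts
        omega
      · have hss : Cut T s r ⊂ Cut T t s := by
          refine ⟨cut_subset hT hts hr hrt, fun hsub2 => ?_⟩
          exact (not_mem_cut_self s r) (hsub2 (self_mem_cut hts.ne))
        have hlt2 : (Cut T s r).ncard < (Cut T t s).ncard :=
          Set.ncard_lt_ncard hss (Set.toFinite _)
        have := hmin (s, r) ⟨hr, hlt⟩
        simp only at this
        omega
    · push_neg at hC
      obtain ⟨t0⟩ := hT.isConnected.nonempty
      exact ⟨t0, fun r hr => hC (t0, r) hr⟩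
  obtain ⟨t0, hcent⟩ := hcentroid
  refine ⟨D.bag t0, hD t0, ?_⟩
  intro c
  have key : ∀ (v : V), v ∉ D.bag t0 → ∀ t', v ∈ D.bag t' → ∀ s, T.Adj t0 s →
      f v ∈ Cut T t0 s → t' ∈ Cut T t0 s := by
    intro v hv t' hvt' s hs hfv
    obtain ⟨p, hp, -⟩ := hT.existsUnique_path (f v) t'
    by_cases h0 : t0 ∈ p.support
    · exact absurd (D.bag_path (f v) t' t0 p hp h0 ⟨hf v, hvt'⟩) hv
    · exact cut_extend hfv p h0
  have key2 : ∀ (v : V), v ∉ D.bag t0 → ∀ t', v ∈ D.bag t' → ∀ s, T.Adj t0 s →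
      t' ∈ Cut T t0 s → f v ∈ Cut T t0 s := by
    intro v hv t' hvt' s hs ht'
    have hfv : f v ≠ t0 := fun e => hv (e ▸ hf v)
    obtain ⟨s', hs', hfs'⟩ := exists_branch hT hfv
    have ht'2 := key v hv t' hvt' s' hs' hfs'
    by_cases he : s' = s
    · rwa [he] at hfs'
    · exact absurd ht' (fun hbad => cut_branch_disjoint hT hs' hs he t' ht'2 hbad)
  have adjstep : ∀ (u v : V), u ∉ D.bag t0 → v ∉ D.bag t0 → G.Adj u v →
      ∀ s, T.Adj t0 s → f u ∈ Cut T t0 s → f v ∈ Cut T t0 s := by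
    intro u v hu hv huv s hs hfu
    obtain ⟨t', ht'u, ht'v⟩ := D.bag_adj huv
    exact key2 v hv t' ht'v s hs (key u hu t' ht'u s hs hfu)
  have walkstep : ∀ (x y : ↥((D.bag t0)ᶜ : Set V))
      (p : (G.induce ((D.bag t0)ᶜ : Set V)).Walk x y) (s : D.ι), T.Adj t0 s →
      f ↑x ∈ Cut T t0 s → f ↑y ∈ Cut T t0 s := by
    intro x y p
    induction p with
    | nil => exact fun s hs hx => hx
    | @cons a b yy h q ih =>
      intro s hs hx
      exact ih s hs (adjstep ↑a ↑b a.2 b.2 h s hs hx)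
  rcases Set.eq_empty_or_nonempty
      {v : ↥(((D.bag t0)ᶜ : Set V)) |
        (G.induce ((D.bag t0)ᶜ : Set V)).connectedComponentMk v = c ∧ (v : V) ∈ U}
    with hAe | ⟨v0, hv0⟩
  · rw [hAe]
    simp
  · have hv0S : (↑v0 : V) ∉ D.bag t0 := v0.2
    have hfv0 : f ↑v0 ≠ t0 := fun e => hv0S (by have h' := hf (↑v0 : V); rw [e] at h'; exact h')
    obtain ⟨s0, hs0, hfs0⟩ := exists_branch hT hfv0
    have hconst : ∀ v ∈ {v : ↥(((D.bag t0)ᶜ : Set V)) |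
        (G.induce ((D.bag t0)ᶜ : Set V)).connectedComponentMk v = c ∧ (v : V) ∈ U},
        f ↑v ∈ Cut T t0 s0 := by
      intro v hv
      have hreach : (G.induce ((D.bag t0)ᶜ : Set V)).Reachable v0 v :=
        SimpleGraph.ConnectedComponent.exact (hv0.1.trans hv.1.symm)
      obtain ⟨p⟩ := hreach
      exact walkstep v0 v p s0 hs0 hfs0
    have hsubset : (Subtype.val '' {v : ↥(((D.bag t0)ᶜ : Set V)) |
        (G.induce ((D.bag t0)ᶜ : Set V)).connectedComponentMk v = c ∧ (v : V) ∈ U}) ⊆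
        {u | u ∈ U ∧ f u ∈ Cut T t0 s0} := by
      rintro _ ⟨v, hv, rfl⟩
      exact ⟨hv.2, hconst v hv⟩
    have h1 := Set.ncard_image_of_injective
      {v : ↥(((D.bag t0)ᶜ : Set V)) |
        (G.induce ((D.bag t0)ᶜ : Set V)).connectedComponentMk v = c ∧ (v : V) ∈ U}
      (Subtype.val_injective (p := fun x => x ∈ ((D.bag t0)ᶜ : Set V)))
    have h2 := Set.ncard_le_ncard hsubset (Set.toFinite _)
    have h3 := hcent s0 hs0
    rw [hwt] at h3
    simp only at h3
    omega
end

section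
/- Let s ≥ 0 be an integer and write σ_s = ⟨c_1, …, c_{2^{s+1}−1}⟩. Then for every finite sequence ⟨d_1, …, d_x⟩ of positive integers with d_1 + … + d_x ≤ 2^s, there exist indices 1 ≤ i_1 < i_2 < … < i_x ≤ 2^{s+1} − 1 such that d_j ≤ c_{i_j} for all j ∈ {1, …, x}. -/
/-- The universal sequence `σ_s`: `σ_0 = ⟨1⟩` and
`σ_s = σ_{s-1} ⋄ ⟨2^s⟩ ⋄ σ_{s-1}` for `s > 0`. -/
def sigmaSeq : ℕ → List ℕ
  | 0 => [1]
  | s + 1 => sigmaSeq s ++ [2 ^ (s + 1)] ++ sigmaSeq s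

/-- For every sequence `⟨d_1, …, d_x⟩` of positive integers with
`d_1 + ⋯ + d_x ≤ 2^s`, there is a subsequence `⟨c_{i_1}, …, c_{i_x}⟩` of `σ_s`
(indices strictly increasing) with `d_j ≤ c_{i_j}` for all `j`. -/
theorem sigmaSeq_dominating_subsequence (s : ℕ) (d : List ℕ)
    (hpos : ∀ x ∈ d, 0 < x) (hsum : d.sum ≤ 2 ^ s) :
    ∃ c : List ℕ, c.Sublist (sigmaSeq s) ∧ List.Forall₂ (· ≤ ·) d c := by
  induction s generalizing d with
  | zero =>
    match d, hpos, hsum with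
    | [], _, _ => exact ⟨[], List.nil_sublist _, List.Forall₂.nil⟩
    | x :: t, hpos, hsum =>
      simp only [List.sum_cons, pow_zero] at hsum
      have hx : 0 < x := hpos x (by simp)
      have hx1 : x = 1 := by omega
      have ht : t = [] := by
        rcases t with _ | ⟨y, t'⟩
        · rfl
        · have := hpos y (by simp)
          simp [List.sum_cons] at hsum
          omega
      subst hx1; subst ht
      exact ⟨[1], List.Sublist.refl _, by simp⟩
  | succ s ih =>
    by_cases hle : d.sum ≤ 2 ^ s
    · obtain ⟨c, hc, hf⟩ := ih d hpos hle
      refine ⟨c, ?_, hf⟩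
      show c.Sublist (sigmaSeq s ++ [2 ^ (s + 1)] ++ sigmaSeq s)
      exact hc.trans (by simp)
    · -- split: k = largest k with (d.take k).sum ≤ 2^s
      push_neg at hle
      set P : ℕ → Prop := fun k => (d.take k).sum ≤ 2 ^ s with hP
      have hP0 : P 0 := by simp [hP]
      set k := Nat.findGreatest P d.length with hk
      have hPk : P k := Nat.findGreatest_spec (Nat.zero_le _) hP0
      have hklt : k < d.length := by
        by_contra h
        push_neg at h
        have : d.take k = d := List.take_of_length_le h
        rw [hP, this] at hPk
        omega
      have hnPk1 : ¬ P (k + 1) :=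
        Nat.findGreatest_is_greatest (Nat.lt_succ_self k) hklt
      have hklt' : k < d.length := hklt
      set m := d[k] with hmdef
      have hm : d.drop k = m :: d.drop (k + 1) := List.drop_eq_getElem_cons hklt
      have hsplit : d = d.take k ++ m :: d.drop (k + 1) := by
        rw [← hm, List.take_append_drop]
      have hsum_take1 : (d.take (k+1)).sum = (d.take k).sum + m :=
        List.sum_take_succ d k hklt
      have hgt : 2 ^ s < (d.take (k+1)).sum := by
        simpa [hP] using hnPk1
      have hsum_all : (d.take (k+1)).sum + (d.drop (k+1)).sum = d.sum := by
        rw [← List.sum_append, List.take_append_drop]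
      have hb : (d.drop (k+1)).sum ≤ 2 ^ s := by
        have h1 : d.sum ≤ 2 ^ (s+1) := hsum
        have h2 : 2 ^ (s+1) = 2 ^ s + 2 ^ s := by ring
        omega
      have hm_le : m ≤ 2 ^ (s+1) := by
        have hmem : m ∈ d := by rw [hsplit]; simp
        calc m ≤ d.sum := List.single_le_sum (fun x _ => Nat.zero_le x) m hmem
        _ ≤ 2 ^ (s+1) := hsum
      have hpos_a : ∀ x ∈ d.take k, 0 < x := fun x hx => hpos x (List.mem_of_mem_take hx)
      have hpos_b : ∀ x ∈ d.drop (k+1), 0 < x := fun x hx => hpos x (List.mem_of_mem_drop hx)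
      obtain ⟨ca, hca, hfa⟩ := ih (d.take k) hpos_a hPk
      obtain ⟨cb, hcb, hfb⟩ := ih (d.drop (k+1)) hpos_b hb
      refine ⟨ca ++ 2 ^ (s+1) :: cb, ?_, ?_⟩
      · show (ca ++ 2 ^ (s+1) :: cb).Sublist (sigmaSeq s ++ [2 ^ (s + 1)] ++ sigmaSeq s)
        rw [List.append_assoc]
        exact hca.append (hcb.cons₂ _)
      · rw [hsplit]
        exact List.rel_append hfa (List.Forall₂.cons hm_le hfb)
end

section
/- Define L : ℕ × ℕ → ℕ by L(0, k) = 2^k and L(h+1, k) = Σ_{i=0}^{k} 2^{k−i+1} · L(h, i). Then for all natural numbers h and k, L(h, k) = 2^{h+k} · C(h+k, k), where C denotes the binomial coefficient. -/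
/-- The length recurrence for leaf sequences:
`L(0, k) = 2^k` and `L(h+1, k) = Σ_{i=0}^{k} 2^{k-i+1} · L(h, i)`. -/
def L : ℕ → ℕ → ℕ
  | 0, k => 2 ^ k
  | h + 1, k => ∑ i ∈ Finset.range (k + 1), 2 ^ (k - i + 1) * L h i

lemma sum_choose_aux (h k : ℕ) :
    ∑ i ∈ Finset.range (k + 1), (h + i).choose i = (h + k + 1).choose k := by
  have : ∑ i ∈ Finset.range (k + 1), (h + i).choose i
      = ∑ m ∈ Finset.Icc h (h + k), m.choose h := by
    rw [Finset.sum_bij' (fun i _ => h + i) (fun m _ => m - h)]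
    · intro i hi; simp at hi ⊢; omega
    · intro m hm; simp at hm ⊢; omega
    · intro i hi; omega
    · intro m hm; simp at hm; omega
    · intro i hi
      rw [← Nat.choose_symm (Nat.le_add_right h i)]
      congr 1; omega
  rw [this, Nat.sum_Icc_choose]
  rw [← Nat.choose_symm (show h + 1 ≤ h + k + 1 by omega)]
  congr 1; omega

/-- `L(h, k) = 2^{h+k} · C(h+k, k)`. -/
theorem L_closed_form (h k : ℕ) : L h k = 2 ^ (h + k) * (h + k).choose k := by
  induction h generalizing k with
  | zero => simp [L]
  | succ h ih =>
    rw [L]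
    have : ∀ i ∈ Finset.range (k + 1),
        2 ^ (k - i + 1) * L h i = 2 ^ (h + k + 1) * (h + i).choose i := by
      intro i hi
      simp only [Finset.mem_range] at hi
      rw [ih i, ← mul_assoc, ← pow_add]
      congr 2
      omega
    rw [Finset.sum_congr rfl this, ← Finset.mul_sum, sum_choose_aux]
    rw [show h + 1 + k = h + k + 1 from by omega]
end

section
/- Let G be a finite graph with a rooted full binary tree decomposition (T,B), and let t be an internal node of T with children t1 and t2. Let p = (v_0, v_1, …, v_l) be a path in G all of whose edges belong to E↕(t). Then there exist indices 0 = j_0 ≤ j_1 ≤ … ≤ j_k = l such that: for each m ∈ {1,…,k}, all edges of the subpath (v_{j_{m−1}}, …, v_{j_m}) belong to E↕(t1) or all of them belong to E↕(t2); and each breakpoint vertex v_{j_m} (0 ≤ m ≤ k) that also satisfies v_{j_m} ∉ Vanc(t) does not occur, i.e., every v_{j_m} belongs to Vanc(t), provided v_0 and v_l belong to Vanc(t). -/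
/-- A rooted full binary tree with a bag of vertices at every node:
every node has either zero or exactly two children. -/
inductive BTree (V : Type) : Type where
  | leaf : Set V → BTree V
  | node : Set V → BTree V → BTree V → BTree V

namespace BTree

variable {V : Type}

/-- The bag at the root of a binary tree. -/
def rootBag : BTree V → Set V
  | leaf b => b
  | node b _ _ => b

/-- The subtree rooted at position `p` (a list of left/right moves from the root),
if `p` is a valid position. -/
def subtreeAt : BTree V → List Bool → Option (BTree V)
  | t, [] => some t
  | leaf _, _ :: _ => none
  | node _ l _, false :: p => subtreeAt l p
  | node _ _ r, true :: p => subtreeAt r p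

/-- `p` is a valid position (node) of the tree `T`. -/
def IsPos (T : BTree V) (p : List Bool) : Prop := (subtreeAt T p).isSome

/-- The bag at position `p` of the tree `T` (empty if `p` is invalid). -/
def bagAt (T : BTree V) (p : List Bool) : Set V :=
  ((subtreeAt T p).map rootBag).getD ∅

/-- `p3` lies on the (unique) path between the nodes `p1` and `p2` of a rooted
tree whose nodes are positions: `p3` is an ancestor of `p1` or of `p2`, and
every common ancestor of `p1` and `p2` is an ancestor of `p3`. -/
def OnPath (p1 p2 p3 : List Bool) : Prop :=
  (p3 <+: p1 ∨ p3 <+: p2) ∧ ∀ q : List Bool, q <+: p1 → q <+: p2 → q <+: p3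

/-- `Vanc T t` is the union of the bags of all ancestors of `t` (inclusive). -/
def Vanc (T : BTree V) (t : List Bool) : Set V :=
  {v | ∃ p : List Bool, p <+: t ∧ v ∈ bagAt T p}

end BTree

open BTree

/-- `T` is a (rooted, full binary) tree decomposition of the simple graph `G`. -/
structure IsBTreeDecomp {V : Type} (G : SimpleGraph V) (T : BTree V) : Prop where
  cover : ∀ v : V, ∃ p : List Bool, IsPos T p ∧ v ∈ bagAt T p
  edge : ∀ ⦃a b : V⦄, G.Adj a b → ∃ p : List Bool, IsPos T p ∧ a ∈ bagAt T p ∧ b ∈ bagAt T p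
  path : ∀ p1 p2 p3 : List Bool, IsPos T p1 → IsPos T p2 → OnPath p1 p2 p3 →
    bagAt T p1 ∩ bagAt T p2 ⊆ bagAt T p3

/-- `EUpDown G T t a b`: `{a, b}` is an edge of `G` whose endpoints both lie in the
bag of some node that is an ancestor or a descendant of `t`. -/
def EUpDown {V : Type} (G : SimpleGraph V) (T : BTree V) (t : List Bool) (a b : V) : Prop :=
  G.Adj a b ∧ ∃ p : List Bool, IsPos T p ∧ (p <+: t ∨ t <+: p) ∧
    a ∈ bagAt T p ∧ b ∈ bagAt T p

section Aux

variable {V : Type} {G : SimpleGraph V} {T : BTree V} {t : List Bool}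

lemma prefix_snoc {α : Type*} {p t : List α} {x : α} (h : p <+: t ++ [x]) :
    p <+: t ∨ p = t ++ [x] := by
  rcases List.prefix_or_prefix_of_prefix h (t.prefix_append [x]) with h' | h'
  · exact .inl h'
  · rcases Nat.lt_or_ge p.length (t.length + 1) with hl | hl
    · left
      have := h'.eq_of_length (le_antisymm h'.length_le (by omega))
      rw [← this]
    · right
      exact h.eq_of_length (le_antisymm h.length_le (by simpa using hl))

lemma eupdown_split {a b : V} (h : EUpDown G T t a b) :
    EUpDown G T (t ++ [false]) a b ∨ EUpDown G T (t ++ [true]) a b := by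
  obtain ⟨hadj, p, hp, hrel, ha, hb⟩ := h
  rcases hrel with hpt | htp
  · exact .inl ⟨hadj, p, hp, .inl (hpt.trans (t.prefix_append _)), ha, hb⟩
  · obtain ⟨s, rfl⟩ := htp
    cases s with
    | nil => exact .inl ⟨hadj, _, hp, .inl (by simpa using t.prefix_append [false]), ha, hb⟩
    | cons c s' =>
      cases c
      · exact .inl ⟨hadj, _, hp, .inr ⟨s', by simp⟩, ha, hb⟩
      · exact .inr ⟨hadj, _, hp, .inr ⟨s', by simp⟩, ha, hb⟩

lemma snoc_eq_of_prefix {x y : Bool} {p : List Bool} (h1 : t ++ [x] <+: p)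
    (h2 : t ++ [y] <+: p) : x = y := by
  rcases List.prefix_or_prefix_of_prefix h1 h2 with h | h
  · have := h.eq_of_length (by simp)
    simp only [List.append_cancel_left_eq, List.cons.injEq] at this
    exact this.1
  · have := h.eq_of_length (by simp)
    simp only [List.append_cancel_left_eq, List.cons.injEq] at this
    exact this.1.symm

lemma breakpoint_mem_Vanc (hdec : IsBTreeDecomp G T) {x y : Bool} (hxy : x ≠ y)
    {u w z : V} (h1 : EUpDown G T (t ++ [x]) u w) (h2 : EUpDown G T (t ++ [y]) w z) :
    w ∈ Vanc T t := by
  obtain ⟨-, p, hp, hrp, -, hwp⟩ := h1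
  obtain ⟨-, q, hq, hrq, hwq, -⟩ := h2
  have hp' : p <+: t ∨ t ++ [x] <+: p := by
    rcases hrp with h | h
    · rcases prefix_snoc h with h | rfl
      · exact .inl h
      · exact .inr (List.prefix_refl _)
    · exact .inr h
  have hq' : q <+: t ∨ t ++ [y] <+: q := by
    rcases hrq with h | h
    · rcases prefix_snoc h with h | rfl
      · exact .inl h
      · exact .inr (List.prefix_refl _)
    · exact .inr h
  rcases hp' with h | hxp
  · exact ⟨p, h, hwp⟩
  rcases hq' with h | hyq
  · exact ⟨q, h, hwq⟩
  have key : ∀ r : List Bool, r <+: p → r <+: q → r <+: t := by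
    intro r hrp2 hrq2
    rcases List.prefix_or_prefix_of_prefix hrp2 ((t.prefix_append [x]).trans hxp) with h | h
    · exact h
    · obtain ⟨s, rfl⟩ := h
      cases s with
      | nil => simp
      | cons c s' =>
        exfalso
        have hc : t ++ [c] <+: t ++ c :: s' := ⟨s', by simp⟩
        have hcx : c = x := snoc_eq_of_prefix (hc.trans hrp2) hxp
        have hcy : c = y := snoc_eq_of_prefix (hc.trans hrq2) hyq
        exact hxy (hcx ▸ hcy)
  exact ⟨t, List.prefix_refl t,
    hdec.path p q t hp hq ⟨.inl ((t.prefix_append [x]).trans hxp), key⟩ ⟨hwp, hwq⟩⟩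

end Aux

/-- A path `v_0, …, v_l` in `G` all of whose edges lie in `E↕(t)`, with both
endpoints in `Vanc(t)`, can be split into consecutive subpaths
`v_{j_{m-1}}, …, v_{j_m}` each of which lies entirely in `E↕(t1)` or entirely in
`E↕(t2)` (where `t1, t2` are the children of the internal node `t`), and all the
breakpoint vertices `v_{j_m}` belong to `Vanc(t)`. -/
theorem path_splits_at_ancestor_vertices {V : Type} [Fintype V] (G : SimpleGraph V)
    (T : BTree V) (hdec : IsBTreeDecomp G T) (t : List Bool) (b : Set V)
    (lt rt : BTree V) (hint : subtreeAt T t = some (BTree.node b lt rt))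
    (l : ℕ) (v : ℕ → V)
    (hpath : ∀ i < l, EUpDown G T t (v i) (v (i + 1)))
    (hinj : ∀ i ≤ l, ∀ j ≤ l, v i = v j → i = j)
    (h0 : v 0 ∈ Vanc T t) (hl : v l ∈ Vanc T t) :
    ∃ (k : ℕ) (j : ℕ → ℕ), j 0 = 0 ∧ j k = l ∧ (∀ m < k, j m ≤ j (m + 1)) ∧
      (∀ m < k,
        (∀ i : ℕ, j m ≤ i → i < j (m + 1) → EUpDown G T (t ++ [false]) (v i) (v (i + 1))) ∨
        (∀ i : ℕ, j m ≤ i → i < j (m + 1) → EUpDown G T (t ++ [true]) (v i) (v (i + 1)))) ∧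
      (∀ m ≤ k, v (j m) ∈ Vanc T t) := by
  classical
  set c : ℕ → Bool := fun i =>
    if EUpDown G T (t ++ [true]) (v i) (v (i + 1)) then true else false with hc
  have hlab : ∀ i < l, EUpDown G T (t ++ [c i]) (v i) (v (i + 1)) := by
    intro i hi
    by_cases h : EUpDown G T (t ++ [true]) (v i) (v (i + 1))
    · simpa [hc, h] using h
    · have := (eupdown_split (hpath i hi)).resolve_right h
      simpa [hc, h] using this
  have main : ∀ n, n ≤ l → v n ∈ Vanc T t →
      ∃ (k : ℕ) (j : ℕ → ℕ), j 0 = 0 ∧ j k = n ∧ (∀ m < k, j m ≤ j (m + 1)) ∧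
      (∀ m < k,
        (∀ i : ℕ, j m ≤ i → i < j (m + 1) → EUpDown G T (t ++ [false]) (v i) (v (i + 1))) ∨
        (∀ i : ℕ, j m ≤ i → i < j (m + 1) → EUpDown G T (t ++ [true]) (v i) (v (i + 1)))) ∧
      (∀ m ≤ k, v (j m) ∈ Vanc T t) := by
    intro n
    induction n using Nat.strong_induction_on with
    | _ n IH =>
      intro hnl hn
      cases n with
      | zero =>
        exact ⟨0, fun _ => 0, rfl, rfl, by omega, by omega, fun m _ => h0⟩
      | succ nn =>
        have hex : ∃ i, ∀ i', i ≤ i' → i' ≤ nn → c i' = c nn :=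
          ⟨nn, fun i' h1 h2 => by rw [le_antisymm h2 h1]⟩
        set i0 := Nat.find hex with hi0def
        have hi0 : ∀ i', i0 ≤ i' → i' ≤ nn → c i' = c nn := Nat.find_spec hex
        have hi0n : i0 ≤ nn := Nat.find_min' hex (fun i' h1 h2 => by rw [le_antisymm h2 h1])
        have hvi0 : v i0 ∈ Vanc T t := by
          rcases Nat.eq_zero_or_pos i0 with h | h
          · rw [h]; exact h0
          · have hmin := Nat.find_min hex (show i0 - 1 < i0 by omega)
            push_neg at hmin
            obtain ⟨i', h1, h2, h3⟩ := hmin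
            have hi'eq : i' = i0 - 1 := by
              by_contra hne
              exact h3 (hi0 i' (by omega) h2)
            have hcne : c (i0 - 1) ≠ c i0 := by
              rw [hi0 i0 le_rfl hi0n]
              exact hi'eq ▸ h3
            have e1 := hlab (i0 - 1) (by omega)
            have e2 := hlab i0 (by omega)
            have hrw : i0 - 1 + 1 = i0 := by omega
            rw [hrw] at e1
            exact breakpoint_mem_Vanc hdec hcne e1 e2
        obtain ⟨k, j, hj0, hjk, hmono, hseg, hbp⟩ := IH i0 (by omega) (by omega) hvi0
        have hseg' : ∀ i, i0 ≤ i → i < nn + 1 → EUpDown G T (t ++ [c nn]) (v i) (v (i + 1)) := by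
          intro i hi1 hi2
          have := hlab i (by omega)
          rwa [hi0 i hi1 (by omega)] at this
        refine ⟨k + 1, fun m => if m ≤ k then j m else nn + 1, by simp [hj0], by simp, ?_, ?_, ?_⟩
        · intro m hm
          by_cases h : m < k
          · simp only [if_pos (le_of_lt h), if_pos (Nat.succ_le_of_lt h)]
            exact hmono m h
          · have hmk : m = k := by omega
            subst hmk
            simp only [if_pos le_rfl, if_neg (show ¬ m + 1 ≤ m by omega), hjk]
            omega
        · intro m hm
          by_cases h : m < k
          · have := hseg m h
            simpa only [if_pos (le_of_lt h), if_pos (Nat.succ_le_of_lt h)] using this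
          · have hmk : m = k := by omega
            subst hmk
            simp only [if_pos le_rfl, if_neg (show ¬ m + 1 ≤ m by omega), hjk]
            cases hcnn : c nn
            · left
              intro i h1 h2
              have := hseg' i h1 h2
              rwa [hcnn] at this
            · right
              intro i h1 h2
              have := hseg' i h1 h2
              rwa [hcnn] at this
        · intro m hm
          by_cases h : m ≤ k
          · simp only [if_pos h]
            exact hbp m h
          · have hmk : m = k + 1 := by omega
            subst hmk
            simpa only [if_neg (show ¬ k + 1 ≤ k by omega)] using hn
  exact main l le_rfl hl
end

section
/- Let G be a finite directed graph with a rooted full binary tree decomposition (T,B) (directions of edges are ignored for the decomposition conditions). Let t be a node of T, let d be a positive power of 2, and let M_0 ⊆ V(G). Suppose x ∈ M_0, x and y both belong to Vanc(t), and there is a directed path from x to y in G using at most d edges, every edge of which belongs to E↕(t). Let f_1, …, f_m be the leaf sequence lseq(t, d) and define the marking sets M_i = { z ∈ Vanc(f_i) : ∃ w ∈ M_{i−1} with w = z or (w,z) a directed edge of G } for i = 1, …, m. Then y ∈ M_m. -/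
open BTree

/-- `T` is a (rooted, full binary) tree decomposition of the directed graph `G`
(directions of edges are ignored for the decomposition conditions). -/
structure IsBTreeDecompDir {V : Type} (G : V → V → Prop) (T : BTree V) : Prop where
  cover : ∀ v : V, ∃ p : List Bool, IsPos T p ∧ v ∈ bagAt T p
  edge : ∀ ⦃a b : V⦄, G a b → ∃ p : List Bool, IsPos T p ∧ a ∈ bagAt T p ∧ b ∈ bagAt T p
  path : ∀ p1 p2 p3 : List Bool, IsPos T p1 → IsPos T p2 → OnPath p1 p2 p3 →
    bagAt T p1 ∩ bagAt T p2 ⊆ bagAt T p3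

/-- `EUpDownDir G T t a b`: `(a, b)` is a directed edge of `G` whose endpoints both
lie in the bag of some node that is an ancestor or a descendant of `t`. -/
def EUpDownDir {V : Type} (G : V → V → Prop) (T : BTree V) (t : List Bool) (a b : V) : Prop :=
  G a b ∧ ∃ p : List Bool, IsPos T p ∧ (p <+: t ∨ t <+: p) ∧
    a ∈ bagAt T p ∧ b ∈ bagAt T p

/-- The leaf sequence `lseq(t, d)` (as a list of positions in the whole tree, the
subtree rooted at position `pos` being `t`): if `t` is a leaf then it is `t`
repeated `d` times, and otherwise it is
`lseq(left t, c_1) ⋄ lseq(right t, c_1) ⋄ ⋯ ⋄ lseq(left t, c_{2d-1}) ⋄ lseq(right t, c_{2d-1})`,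
where `c_i` is the `i`-th entry of `σ_{log₂ d}`. -/
def lseq {V : Type} : BTree V → ℕ → List Bool → List (List Bool)
  | BTree.leaf _, d, pos => List.replicate d pos
  | BTree.node _ l r, d, pos =>
      (sigmaSeq (Nat.log2 d)).flatMap fun c =>
        lseq l c (pos ++ [false]) ++ lseq r c (pos ++ [true])

/-- One marking step: given the current marked set `M` and a leaf `f`, the new
marked set is `{ z ∈ Vanc(f) : ∃ w ∈ M, w = z or (w, z) is an edge }`. -/
def markStep {V : Type} (G : V → V → Prop) (T : BTree V) (M : Set V) (f : List Bool) : Set V :=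
  {z | z ∈ Vanc T f ∧ ∃ w ∈ M, w = z ∨ G w z}

/-! ### Auxiliary lemmas -/

namespace BTree
variable {V : Type}

theorem subtreeAt_append (T : BTree V) (p q : List Bool) :
    subtreeAt T (p ++ q) = (subtreeAt T p).bind (fun s => subtreeAt s q) := by
  induction p generalizing T with
  | nil => simp [subtreeAt]
  | cons b p ih =>
    cases T with
    | leaf _ => simp [subtreeAt]
    | node _ l r => cases b <;> simp [subtreeAt, ih]

theorem Vanc_mono {T : BTree V} {t f : List Bool} (h : t <+: f) :
    Vanc T t ⊆ Vanc T f := by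
  rintro v ⟨p, hp, hv⟩; exact ⟨p, hp.trans h, hv⟩

theorem lseq_prefix (s : BTree V) (c : ℕ) (pos f : List Bool)
    (hf : f ∈ lseq s c pos) : pos <+: f := by
  induction s generalizing c pos with
  | leaf b =>
    rw [lseq] at hf
    rw [List.eq_of_mem_replicate hf]
  | node b lc rc ihl ihr =>
    rw [lseq] at hf
    obtain ⟨c', _, hf⟩ := List.mem_flatMap.mp hf
    rcases List.mem_append.mp hf with h | h
    · exact (List.prefix_append pos [false]).trans (ihl c' (pos ++ [false]) h)
    · exact (List.prefix_append pos [true]).trans (ihr c' (pos ++ [true]) h)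

end BTree

open BTree

/-- Marching a path through a list of leaf positions that all extend `t`. -/
theorem march {V : Type} {G : V → V → Prop} {T : BTree V} {t : List Bool} :
    ∀ (fs : List (List Bool)) (v : ℕ → V) (l : ℕ) (M : Set V),
    l ≤ fs.length → (∀ f ∈ fs, t <+: f) →
    (∀ i ≤ l, v i ∈ Vanc T t) → v 0 ∈ M →
    (∀ i < l, G (v i) (v (i + 1))) →
    v l ∈ fs.foldl (markStep G T) M := by
  intro fs
  induction fs with
  | nil =>
    intro v l M hl _ _ h0 _
    have : l = 0 := by simpa using hl
    subst this
    simpa using h0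
  | cons f fs ih =>
    intro v l M hl hpre hvanc h0 hedge
    have hft : t <+: f := hpre f List.mem_cons_self
    cases l with
    | zero =>
      simp only [List.foldl_cons]
      refine ih v 0 _ (Nat.zero_le _) (fun g hg => hpre g (List.mem_cons_of_mem _ hg))
        hvanc ?_ (by intro i hi; omega)
      exact ⟨Vanc_mono hft (hvanc 0 le_rfl), v 0, h0, Or.inl rfl⟩
    | succ m =>
      simp only [List.foldl_cons]
      have hstep : v 1 ∈ markStep G T M f :=
        ⟨Vanc_mono hft (hvanc 1 (by omega)), v 0, h0, Or.inr (hedge 0 (by omega))⟩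
      exact ih (fun i => v (i + 1)) m _ (by simpa using hl)
        (fun g hg => hpre g (List.mem_cons_of_mem _ hg))
        (fun i hi => hvanc (i + 1) (by omega)) hstep
        (fun i hi => hedge (i + 1) (by omega))

theorem sigmaSeq_mem {k c : ℕ} (h : c ∈ sigmaSeq k) : ∃ e, c = 2 ^ e := by
  induction k with
  | zero =>
    simp only [sigmaSeq, List.mem_singleton] at h
    exact ⟨0, by simpa using h⟩
  | succ k ih =>
    simp only [sigmaSeq, List.mem_append, List.mem_singleton] at h
    rcases h with (h | h) | h
    · exact ih h
    · exact ⟨k + 1, h⟩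
    · exact ih h

/-- Domination of a list by a sublist of another list. -/
inductive DomList : List ℕ → List ℕ → Prop
  | nil (cs : List ℕ) : DomList [] cs
  | skip {ns cs : List ℕ} (c : ℕ) : DomList ns cs → DomList ns (c :: cs)
  | step {n c : ℕ} {ns cs : List ℕ} : n ≤ c → DomList ns cs → DomList (n :: ns) (c :: cs)

theorem DomList.prepend {ns cs2 : List ℕ} (cs : List ℕ) (h : DomList ns cs2) :
    DomList ns (cs ++ cs2) := by
  induction cs with
  | nil => exact h
  | cons c cs ih => exact .skip c ih

theorem DomList.weaken_right {ns cs : List ℕ} (h : DomList ns cs) (cs2 : List ℕ) :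
    DomList ns (cs ++ cs2) := by
  induction h with
  | nil cs => exact .nil _
  | skip c _ ih => exact .skip c ih
  | step hle _ ih => exact .step hle ih

theorem DomList.append {ns1 ns2 cs1 cs2 : List ℕ} (h1 : DomList ns1 cs1)
    (h2 : DomList ns2 cs2) : DomList (ns1 ++ ns2) (cs1 ++ cs2) := by
  induction h1 with
  | nil cs => exact h2.prepend cs
  | skip c _ ih => exact .skip c ih
  | step hle _ ih => exact .step hle ih

theorem exists_split : ∀ (ns : List ℕ) (N : ℕ), N < ns.sum →
    ∃ ns1 n ns2, ns = ns1 ++ n :: ns2 ∧ ns1.sum ≤ N ∧ N < ns1.sum + n := by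
  intro ns
  induction ns with
  | nil => intro N h; simp at h
  | cons a ns ih =>
    intro N h
    by_cases ha : N < a
    · exact ⟨[], a, ns, rfl, by simp, by simpa using ha⟩
    · push_neg at ha
      have h' : N - a < ns.sum := by simp only [List.sum_cons] at h; omega
      obtain ⟨ns1, n, ns2, rfl, h1, h2⟩ := ih (N - a) h'
      exact ⟨a :: ns1, n, ns2, rfl, by simp only [List.sum_cons]; omega,
        by simp only [List.sum_cons]; omega⟩

theorem dom_universal : ∀ (k : ℕ) (ns : List ℕ), (∀ n ∈ ns, 1 ≤ n) → ns.sum ≤ 2 ^ k →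
    DomList ns (sigmaSeq k) := by
  intro k
  induction k with
  | zero =>
    intro ns h1 hs
    match ns with
    | [] => exact .nil _
    | [n] =>
      have hn1 : 1 ≤ n := h1 n (by simp)
      have : n ≤ 1 := by simpa using hs
      have : n = 1 := le_antisymm this hn1
      subst this
      exact .step le_rfl (.nil _)
    | a :: b :: ns =>
      exfalso
      have h1a : 1 ≤ a := h1 a (by simp)
      have h1b : 1 ≤ b := h1 b (by simp)
      simp only [List.sum_cons, pow_zero] at hs
      omega
  | succ k ih =>
    intro ns h1 hs
    show DomList ns (sigmaSeq k ++ [2 ^ (k + 1)] ++ sigmaSeq k)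
    by_cases hsmall : ns.sum ≤ 2 ^ k
    · rw [List.append_assoc]
      exact (ih ns h1 hsmall).weaken_right _
    · push_neg at hsmall
      obtain ⟨ns1, n, ns2, rfl, hle, hgt⟩ := exists_split ns (2 ^ k) hsmall
      have hsum : ns1.sum + n + ns2.sum ≤ 2 ^ k + 2 ^ k := by
        have : (ns1 ++ n :: ns2).sum = ns1.sum + (n + ns2.sum) := by simp
        rw [this] at hs
        have h2 : (2:ℕ) ^ (k + 1) = 2 ^ k + 2 ^ k := by ring
        omega
      have d1 : DomList ns1 (sigmaSeq k) :=
        ih ns1 (fun m hm => h1 m (by simp [hm])) hle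
      have d2 : DomList ns2 (sigmaSeq k) :=
        ih ns2 (fun m hm => h1 m (by simp [hm])) (by omega)
      have hn : n ≤ 2 ^ (k + 1) := by
        have h2 : (2:ℕ) ^ (k + 1) = 2 ^ k + 2 ^ k := by ring
        omega
      rw [List.append_assoc]
      exact d1.append (DomList.step hn d2)

/-- A chain of pieces, each consuming a budget. -/
inductive DChain {V : Type} (R : ℕ → V → V → Prop) : V → List ℕ → V → Prop
  | nil (a : V) : DChain R a [] a
  | cons {a z b : V} {n : ℕ} {ns : List ℕ} :
      R n a z → DChain R z ns b → DChain R a (n :: ns) b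

/-- An edge hosted on the side `s` of `t` (i.e. at an ancestor of `t` or a
descendant of the `s`-child of `t`). -/
def SideHost {V : Type} (G : V → V → Prop) (T : BTree V) (t : List Bool) (s : Bool)
    (a b : V) : Prop :=
  G a b ∧ ∃ p : List Bool, IsPos T p ∧ (p <+: t ∨ t ++ [s] <+: p) ∧
    a ∈ bagAt T p ∧ b ∈ bagAt T p

/-- A vertex in a bag on the `false` side and a bag on the `true` side of `t`
lies in `Vanc t`. -/
theorem mem_Vanc_of_sides {V : Type} {G : V → V → Prop} {T : BTree V}
    (hdec : IsBTreeDecompDir G T) {t : List Bool} {a : V}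
    (h1 : ∃ p, IsPos T p ∧ (p <+: t ∨ t ++ [false] <+: p) ∧ a ∈ bagAt T p)
    (h2 : ∃ p, IsPos T p ∧ (p <+: t ∨ t ++ [true] <+: p) ∧ a ∈ bagAt T p) :
    a ∈ Vanc T t := by
  obtain ⟨p1, hpos1, hp1, ha1⟩ := h1
  obtain ⟨p2, hpos2, hp2, ha2⟩ := h2
  rcases hp1 with hp1 | hp1
  · exact ⟨p1, hp1, ha1⟩
  rcases hp2 with hp2 | hp2
  · exact ⟨p2, hp2, ha2⟩
  refine ⟨t, List.prefix_rfl, hdec.path p1 p2 t hpos1 hpos2 ⟨?_, ?_⟩ ⟨ha1, ha2⟩⟩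
  · exact Or.inl ((List.prefix_append t [false]).trans hp1)
  · intro q hq1 hq2
    rcases List.prefix_or_prefix_of_prefix hq1 ((List.prefix_append t [false]).trans hp1)
      with h | h
    · exact h
    · obtain ⟨q1, rfl⟩ := h
      obtain ⟨r1, hr1⟩ := hp1
      obtain ⟨r2, hr2⟩ := hp2
      rw [← hr1, List.append_assoc] at hq1
      rw [← hr2, List.append_assoc] at hq2
      have hq1' : q1 <+: [false] ++ r1 := (List.prefix_append_right_inj t).mp hq1
      have hq2' : q1 <+: [true] ++ r2 := (List.prefix_append_right_inj t).mp hq2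
      cases q1 with
      | nil => simp
      | cons b q1' =>
        exfalso
        have e1 : b = false := (List.cons_prefix_cons.mp hq1').1
        have e2 : b = true := (List.cons_prefix_cons.mp hq2').1
        rw [e1] at e2
        exact Bool.false_ne_true e2

theorem block_prefix {V : Type} (lc rc : BTree V) (t : List Bool) (c : ℕ)
    (f : List Bool) (hf : f ∈ lseq lc c (t ++ [false]) ++ lseq rc c (t ++ [true])) :
    t <+: f := by
  rcases List.mem_append.mp hf with h | h
  · exact (List.prefix_append t [false]).trans (lseq_prefix _ _ _ _ h)
  · exact (List.prefix_append t [true]).trans (lseq_prefix _ _ _ _ h)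

/-- Shape of the induction hypothesis for the main theorem. -/
def IHStmt {V : Type} (G : V → V → Prop) (T : BTree V) (sub : BTree V) : Prop :=
  ∀ (t : List Bool), subtreeAt T t = some sub → ∀ (d : ℕ), (∃ k : ℕ, d = 2 ^ k) →
  ∀ (M0 : Set V) (x y : V), x ∈ M0 → x ∈ Vanc T t → y ∈ Vanc T t →
  ∀ (l : ℕ), l ≤ d → ∀ (v : ℕ → V), v 0 = x → v l = y →
  (∀ i < l, EUpDownDir G T t (v i) (v (i + 1))) →
  y ∈ (lseq sub d t).foldl (markStep G T) M0

/-- The relation describing a "piece" that a single block of the leaf sequence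
(with budget at least the length of the piece) can process. -/
def PieceRel {V : Type} (G : V → V → Prop) (T : BTree V) (t : List Bool)
    (lc rc : BTree V) (n : ℕ) (a b : V) : Prop :=
  a ∈ Vanc T t ∧ b ∈ Vanc T t ∧ ∀ c : ℕ, n ≤ c → (∃ e, c = 2 ^ e) → ∀ M : Set V, a ∈ M →
    b ∈ (lseq lc c (t ++ [false]) ++ lseq rc c (t ++ [true])).foldl (markStep G T) M

theorem blockSide {V : Type} {G : V → V → Prop} {T : BTree V} {t : List Bool}
    {lc rc : BTree V}
    (hsl : subtreeAt T (t ++ [false]) = some lc)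
    (hsr : subtreeAt T (t ++ [true]) = some rc)
    (IHl : IHStmt G T lc) (IHr : IHStmt G T rc)
    (side : Bool) (n : ℕ) (a b : V) (ha : a ∈ Vanc T t) (hb : b ∈ Vanc T t)
    (w : ℕ → V) (hw0 : w 0 = a) (hwn : w n = b)
    (hside : ∀ i < n, SideHost G T t side (w i) (w (i + 1))) :
    PieceRel G T t lc rc n a b := by
  refine ⟨ha, hb, ?_⟩
  rintro c hnc ⟨e, rfl⟩ M haM
  rw [List.foldl_append]
  have hedge : ∀ (s : Bool), (∀ i < n, SideHost G T t s (w i) (w (i + 1))) →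
      ∀ i < n, EUpDownDir G T (t ++ [s]) (w i) (w (i + 1)) := by
    intro s hs i hi
    obtain ⟨hG, p, hpos, hor, ha', hb'⟩ := hs i hi
    refine ⟨hG, p, hpos, ?_, ha', hb'⟩
    rcases hor with h | h
    · exact Or.inl (h.trans (List.prefix_append t [s]))
    · exact Or.inr h
  cases side with
  | false =>
    have hbL : b ∈ (lseq lc (2 ^ e) (t ++ [false])).foldl (markStep G T) M :=
      IHl (t ++ [false]) hsl (2 ^ e) ⟨e, rfl⟩ M a b haM
        (Vanc_mono (List.prefix_append t [false]) ha)
        (Vanc_mono (List.prefix_append t [false]) hb)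
        n hnc w hw0 hwn (hedge false hside)
    refine march _ (fun _ => b) 0 _ (Nat.zero_le _) ?_ (fun _ _ => hb) hbL
      (by intro i hi; omega)
    intro f hf
    exact (List.prefix_append t [true]).trans (lseq_prefix _ _ _ _ hf)
  | true =>
    have haL : a ∈ (lseq lc (2 ^ e) (t ++ [false])).foldl (markStep G T) M := by
      refine march _ (fun _ => a) 0 _ (Nat.zero_le _) ?_ (fun _ _ => ha) haM
        (by intro i hi; omega)
      intro f hf
      exact (List.prefix_append t [false]).trans (lseq_prefix _ _ _ _ hf)
    exact IHr (t ++ [true]) hsr (2 ^ e) ⟨e, rfl⟩ _ a b haL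
      (Vanc_mono (List.prefix_append t [true]) ha)
      (Vanc_mono (List.prefix_append t [true]) hb)
      n hnc w hw0 hwn (hedge true hside)

theorem foldDom {V : Type} {G : V → V → Prop} {T : BTree V} {t : List Bool}
    {lc rc : BTree V} :
    ∀ {ns cs : List ℕ}, DomList ns cs → (∀ c ∈ cs, ∃ e, c = 2 ^ e) →
    ∀ (a b : V) (M : Set V), DChain (PieceRel G T t lc rc) a ns b → a ∈ M → a ∈ Vanc T t →
    b ∈ (cs.flatMap (fun c => lseq lc c (t ++ [false]) ++ lseq rc c (t ++ [true]))).foldl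
        (markStep G T) M := by
  intro ns cs hdom
  induction hdom with
  | nil cs =>
    intro hcs a b M hchain haM haV
    cases hchain
    refine march _ (fun _ => a) 0 _ (Nat.zero_le _) ?_ (fun _ _ => haV) haM
      (by intro i hi; omega)
    intro f hf
    obtain ⟨c, _, hf⟩ := List.mem_flatMap.mp hf
    exact block_prefix lc rc t c f hf
  | skip c hdom ih =>
    intro hcs a b M hchain haM haV
    rw [List.flatMap_cons, List.foldl_append]
    have haM' : a ∈ (lseq lc c (t ++ [false]) ++ lseq rc c (t ++ [true])).foldl
        (markStep G T) M := by
      refine march _ (fun _ => a) 0 _ (Nat.zero_le _) ?_ (fun _ _ => haV) haM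
        (by intro i hi; omega)
      intro f hf
      exact block_prefix lc rc t c f hf
    exact ih (fun c' hc' => hcs c' (List.mem_cons_of_mem _ hc')) a b _ hchain haM' haV
  | step hnc hdom ih =>
    rename_i n c ns cs
    intro hcs a b M hchain haM haV
    rw [List.flatMap_cons, List.foldl_append]
    cases hchain with
    | cons hR hchain' =>
      rename_i z
      obtain ⟨_, hzV, hproc⟩ := hR
      have hz : z ∈ (lseq lc c (t ++ [false]) ++ lseq rc c (t ++ [true])).foldl
          (markStep G T) M := hproc c hnc (hcs c List.mem_cons_self) M haM
      exact ih (fun c' hc' => hcs c' (List.mem_cons_of_mem _ hc')) z b _ hchain' hz hzV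

theorem decomp {V : Type} {G : V → V → Prop} {T : BTree V}
    (hdec : IsBTreeDecompDir G T) {t : List Bool} {lc rc : BTree V}
    (hsl : subtreeAt T (t ++ [false]) = some lc)
    (hsr : subtreeAt T (t ++ [true]) = some rc)
    (IHl : IHStmt G T lc) (IHr : IHStmt G T rc) :
    ∀ (l : ℕ) (v : ℕ → V), v 0 ∈ Vanc T t → v l ∈ Vanc T t →
    (∀ i < l, SideHost G T t false (v i) (v (i + 1)) ∨
       SideHost G T t true (v i) (v (i + 1))) →
    ∃ ns : List ℕ, ns.sum = l ∧ (∀ n ∈ ns, 1 ≤ n) ∧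
      DChain (PieceRel G T t lc rc) (v 0) ns (v l) := by
  intro l
  induction l using Nat.strong_induction_on with
  | _ l IH =>
    intro v h0 hl hside
    classical
    rcases Nat.eq_zero_or_pos l with rfl | hlpos
    · exact ⟨[], rfl, by simp, DChain.nil _⟩
    obtain ⟨side, hside0⟩ : ∃ s : Bool, SideHost G T t s (v 0) (v 1) := by
      rcases hside 0 hlpos with h | h
      · exact ⟨false, h⟩
      · exact ⟨true, h⟩
    have hP : ∃ j, j = l ∨ (j < l ∧ ¬ SideHost G T t side (v j) (v (j + 1))) :=
      ⟨l, Or.inl rfl⟩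
    set j := Nat.find hP with hjdef
    have hjl : j ≤ l := Nat.find_le (Or.inl rfl)
    have hrun : ∀ i < j, SideHost G T t side (v i) (v (i + 1)) := by
      intro i hi
      have hmin := Nat.find_min hP hi
      push_neg at hmin
      exact hmin.2 (by omega)
    have hj1 : 1 ≤ j := by
      rcases Nat.eq_zero_or_pos j with hj0 | h
      · exfalso
        have hspec := Nat.find_spec hP
        rw [← hjdef, hj0] at hspec
        rcases hspec with h | ⟨_, h⟩
        · omega
        · exact h hside0
      · exact h
    have hvj : v j ∈ Vanc T t := by
      rcases Nat.find_spec hP with heq | ⟨hjl', hnot⟩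
      · rw [← hjdef] at heq
        rw [heq]; exact hl
      · rw [← hjdef] at hjl' hnot
        have hprev : SideHost G T t side (v (j - 1)) (v (j - 1 + 1)) :=
          hrun (j - 1) (by omega)
        have hj' : j - 1 + 1 = j := by omega
        rw [hj'] at hprev
        have hnext : SideHost G T t (!side) (v j) (v (j + 1)) := by
          rcases hside j hjl' with h | h
          · cases side
            · exact absurd h hnot
            · exact h
          · cases side
            · exact h
            · exact absurd h hnot
        obtain ⟨_, p1, hpos1, hor1, _, hvj1⟩ := hprev
        obtain ⟨_, p2, hpos2, hor2, hvj2, _⟩ := hnext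
        cases side
        · exact mem_Vanc_of_sides hdec ⟨p1, hpos1, hor1, hvj1⟩ ⟨p2, hpos2, hor2, hvj2⟩
        · exact mem_Vanc_of_sides hdec ⟨p2, hpos2, hor2, hvj2⟩ ⟨p1, hpos1, hor1, hvj1⟩
    have hpiece : PieceRel G T t lc rc j (v 0) (v j) :=
      blockSide hsl hsr IHl IHr side j (v 0) (v j) h0 hvj v rfl rfl hrun
    have hrest := IH (l - j) (by omega) (fun i => v (j + i))
      (by simpa using hvj)
      (by
        have : j + (l - j) = l := by omega
        simpa [this] using hl)
      (by
        intro i hi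
        have h1 : j + i < l := by omega
        have h2 : j + (i + 1) = (j + i) + 1 := by omega
        simpa [h2] using hside (j + i) h1)
    obtain ⟨ns, hsum, hpos1, hchain⟩ := hrest
    have hjlj : j + (l - j) = l := by omega
    simp only [Nat.add_zero, hjlj] at hchain
    refine ⟨j :: ns, by simp [hsum]; omega, ?_, DChain.cons hpiece hchain⟩
    intro n hn
    rcases List.mem_cons.mp hn with rfl | hn
    · exact hj1
    · exact hpos1 n hn

/-- If `x` is marked, `x, y ∈ Vanc(t)`, and there is a directed path from `x` to
`y` of length at most `d` all of whose edges lie in `E↕(t)`, then after processing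
the leaf sequence `lseq(t, d)` the vertex `y` is marked. -/
theorem marked_after_lseq {V : Type} [Fintype V] (G : V → V → Prop) (T : BTree V)
    (hdec : IsBTreeDecompDir G T)
    (t : List Bool) (s : BTree V) (hs : subtreeAt T t = some s)
    (d : ℕ) (hd : ∃ k : ℕ, d = 2 ^ k)
    (M0 : Set V) (x y : V) (hx : x ∈ M0)
    (hxanc : x ∈ Vanc T t) (hyanc : y ∈ Vanc T t)
    (l : ℕ) (hld : l ≤ d) (v : ℕ → V) (hv0 : v 0 = x) (hvl : v l = y)
    (hpath : ∀ i < l, EUpDownDir G T t (v i) (v (i + 1))) :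
    y ∈ (lseq s d t).foldl (markStep G T) M0 := by
  revert hpath hvl hv0 v hld l hyanc hxanc hx y x M0 hd d hs t
  induction s with
  | leaf bag =>
    intro t hs d hd M0 x y hx hxanc hyanc l hld v hv0 hvl hpath
    have hleaf : ∀ p : List Bool, IsPos T p → t <+: p → p = t := by
      intro p hp htp
      obtain ⟨q, rfl⟩ := htp
      rw [IsPos, subtreeAt_append, hs] at hp
      cases q with
      | nil => simp
      | cons b q => simp [subtreeAt] at hp
    have hanc : ∀ i ≤ l, v i ∈ Vanc T t := by
      intro i hi
      cases i with
      | zero => rw [hv0]; exact hxanc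
      | succ j =>
        obtain ⟨hG, p, hpos, hor, ha, hb⟩ := hpath j (by omega)
        have hpt : p <+: t := by
          rcases hor with h | h
          · exact h
          · rw [hleaf p hpos h]
        exact ⟨p, hpt, hb⟩
    rw [← hvl, lseq]
    refine march _ v l M0 (by simpa using hld) ?_ hanc (hv0 ▸ hx)
      (fun i hi => (hpath i hi).1)
    intro f hf
    rw [List.eq_of_mem_replicate hf]
  | node bag lc rc ihl ihr =>
    intro t hs d hd M0 x y hx hxanc hyanc l hld v hv0 hvl hpath
    obtain ⟨k, rfl⟩ := hd
    have hsl : subtreeAt T (t ++ [false]) = some lc := by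
      rw [subtreeAt_append, hs]; simp [subtreeAt]
    have hsr : subtreeAt T (t ++ [true]) = some rc := by
      rw [subtreeAt_append, hs]; simp [subtreeAt]
    have IHl : IHStmt G T lc := ihl
    have IHr : IHStmt G T rc := ihr
    have hsides : ∀ i < l, SideHost G T t false (v i) (v (i + 1)) ∨
        SideHost G T t true (v i) (v (i + 1)) := by
      intro i hi
      obtain ⟨hG, p, hpos, hor, ha, hb⟩ := hpath i hi
      rcases hor with h | h
      · exact Or.inl ⟨hG, p, hpos, Or.inl h, ha, hb⟩
      · obtain ⟨q, rfl⟩ := h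
        cases q with
        | nil => exact Or.inl ⟨hG, _, hpos, Or.inl (by simp), ha, hb⟩
        | cons bq q' =>
          have hpre : ∀ b : Bool, t ++ [b] <+: t ++ (b :: q') := by
            intro b
            rw [show t ++ (b :: q') = (t ++ [b]) ++ q' by simp]
            exact List.prefix_append _ _
          cases bq
          · exact Or.inl ⟨hG, _, hpos, Or.inr (hpre false), ha, hb⟩
          · exact Or.inr ⟨hG, _, hpos, Or.inr (hpre true), ha, hb⟩
    obtain ⟨ns, hsum, hns1, hchain⟩ :=
      decomp hdec hsl hsr IHl IHr l v (hv0 ▸ hxanc) (hvl ▸ hyanc) hsides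
    have hdom : DomList ns (sigmaSeq k) := dom_universal k ns hns1 (hsum ▸ hld)
    rw [hv0, hvl] at hchain
    rw [← hvl, lseq, Nat.log2_two_pow]
    exact hvl ▸ foldDom hdom (fun c hc => sigmaSeq_mem hc) x y M0 hchain hx hxanc
end
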